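/- arXiv:2002.00315 — 7 statements merged into one kernel-verified Lean document; each statement's English description precedes it below -/
import Mathlib

section
/- Let K ≥ 1, let Ω ⊆ Δ(K) be a convex set all of whose elements have strictly positive coordinates, and let ψ be twice continuously differentiable on an open convex set containing Ω with positive definite Hessian on Ω, satisfying: (i) ∇²ψ(p) ⪰ diag(C₁/p_1², …, C₁/p_K²) for all p ∈ Ω, for some constant C₁ ≥ 9; (ii) for all p, q ∈ Ω with p_i ≤ 2q_i for every i, (∇²ψ(p))⁻¹ ⪯ 4(∇²ψ(q))⁻¹. Let p_t ∈ Ω, let ℓ̂ ∈ ℝ^K, and let p_{t+1} be a minimizer over Ω of p ↦ ⟨p, ℓ̂⟩ + D_ψ(p, p_t). If there exists z ∈ ℝ with ‖ℓ̂ − z·𝟏‖_{(∇²ψ(p_t))⁻¹} ≤ 1/8, then (1/2)·p_{t,i} ≤ p_{t+1,i} ≤ 2·p_{t,i} for every i ∈ [K]. -/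
open Finset

/-- Bregman divergence `D_ψ(x,y) = ψ(x) − ψ(y) − ⟨∇ψ(y), x − y⟩`. -/
noncomputable def breg {K : ℕ} (ψ : (Fin K → ℝ) → ℝ) (x y : Fin K → ℝ) : ℝ :=
  ψ x - ψ y - fderiv ℝ ψ y (x - y)

/-- Quadratic form `vᵀ M v`, i.e. the squared norm `‖v‖²_M`. -/
def quadForm {K : ℕ} (M : Matrix (Fin K) (Fin K) ℝ) (v : Fin K → ℝ) : ℝ :=
  ∑ i, ∑ j, v i * M i j * v j

section helpers
open Matrix

lemma qf_eq {K : ℕ} (M : Matrix (Fin K) (Fin K) ℝ) (v : Fin K → ℝ) :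
    quadForm M v = v ⬝ᵥ (M *ᵥ v) := by
  simp [quadForm, dotProduct, mulVec, Finset.mul_sum, mul_assoc]

lemma qf_nonneg {K : ℕ} {M : Matrix (Fin K) (Fin K) ℝ} (hM : M.PosSemidef)
    (v : Fin K → ℝ) : 0 ≤ quadForm M v := by
  rw [qf_eq]; simpa using hM.dotProduct_mulVec_nonneg v

lemma qf_sub {K : ℕ} (A B : Matrix (Fin K) (Fin K) ℝ) (v : Fin K → ℝ) :
    quadForm (A - B) v = quadForm A v - quadForm B v := by
  simp only [quadForm, Matrix.sub_apply, ← Finset.sum_sub_distrib]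
  refine Finset.sum_congr rfl fun i _ => Finset.sum_congr rfl fun j _ => by ring

lemma qf_smul {K : ℕ} (r : ℝ) (A : Matrix (Fin K) (Fin K) ℝ) (v : Fin K → ℝ) :
    quadForm (r • A) v = r * quadForm A v := by
  simp only [quadForm, Matrix.smul_apply, smul_eq_mul, Finset.mul_sum]
  refine Finset.sum_congr rfl fun i _ => Finset.sum_congr rfl fun j _ => by ring

lemma qf_diag {K : ℕ} (d : Fin K → ℝ) (v : Fin K → ℝ) :
    quadForm (Matrix.diagonal d) v = ∑ i, d i * v i ^ 2 := by
  refine Finset.sum_congr rfl fun i _ => ?_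
  rw [Finset.sum_eq_single i]
  · simp [Matrix.diagonal_apply_eq]; ring
  · intro j _ hj; simp [Matrix.diagonal_apply_ne' _ hj]
  · simp

lemma qf_cs {K : ℕ} {A : Matrix (Fin K) (Fin K) ℝ} (hA : A.PosDef)
    (u w : Fin K → ℝ) : (u ⬝ᵥ w)^2 ≤ quadForm A⁻¹ u * quadForm A w := by
  have hdet : IsUnit A.det := isUnit_iff_ne_zero.2 (ne_of_gt hA.det_pos)
  have hAT : Aᵀ = A := hA.1
  set a := A⁻¹ *ᵥ u with ha
  have key : ∀ t : ℝ, 0 ≤ quadForm A w * (t*t) + (2 * (a ⬝ᵥ (A *ᵥ w))) * t + quadForm A a := by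
    intro t
    have h0 := hA.posSemidef.dotProduct_mulVec_nonneg (a + t • w)
    simp only [star_trivial] at h0
    have expand : (a + t • w) ⬝ᵥ A *ᵥ (a + t • w)
        = quadForm A w * (t*t) + (2 * (a ⬝ᵥ (A *ᵥ w))) * t + quadForm A a := by
      have hsym : w ⬝ᵥ (A *ᵥ a) = a ⬝ᵥ (A *ᵥ w) := by
        rw [Matrix.dotProduct_mulVec, ← Matrix.mulVec_transpose, hAT, dotProduct_comm]
      simp only [Matrix.mulVec_add, Matrix.mulVec_smul, dotProduct_add,
        add_dotProduct, dotProduct_smul, smul_dotProduct, qf_eq,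
        smul_eq_mul, hsym]
      ring
    rw [expand] at h0; exact h0
  have hd := discrim_le_zero key
  rw [discrim] at hd
  have h1 : a ⬝ᵥ (A *ᵥ w) = u ⬝ᵥ w := by
    rw [ha, Matrix.dotProduct_mulVec, ← Matrix.mulVec_transpose, hAT,
      Matrix.mulVec_mulVec, Matrix.mul_nonsing_inv A hdet, Matrix.one_mulVec]
  have h2 : quadForm A a = quadForm A⁻¹ u := by
    rw [qf_eq, qf_eq, ha, Matrix.mulVec_mulVec, Matrix.mul_nonsing_inv A hdet,
      Matrix.one_mulVec, dotProduct_comm]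
  rw [h1, h2] at hd
  nlinarith [hd]

end helpers

set_option maxHeartbeats 2000000 in
/-- Multiplicative stability of the OMD update (Lemma 3 of the paper). -/
theorem stmt1 (K : ℕ) (hK : 1 ≤ K)
    (Ω : Set (Fin K → ℝ)) (hΩconv : Convex ℝ Ω) (hΩsub : Ω ⊆ stdSimplex ℝ (Fin K))
    (hΩpos : ∀ p ∈ Ω, ∀ i, 0 < p i)
    (U : Set (Fin K → ℝ)) (hUopen : IsOpen U) (hUconv : Convex ℝ U) (hΩU : Ω ⊆ U)
    (ψ : (Fin K → ℝ) → ℝ) (hψ : ContDiffOn ℝ 2 ψ U)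
    (H : (Fin K → ℝ) → Matrix (Fin K) (Fin K) ℝ)
    (hHess : ∀ p ∈ U, ∀ v w : Fin K → ℝ,
      fderiv ℝ (fderiv ℝ ψ) p w v = ∑ i, ∑ j, w i * H p i j * v j)
    (hPD : ∀ p ∈ Ω, (H p).PosDef)
    (C₁ : ℝ) (hC₁ : 9 ≤ C₁)
    (hi : ∀ p ∈ Ω, (H p - Matrix.diagonal fun i => C₁ / p i ^ 2).PosSemidef)
    (hii : ∀ p ∈ Ω, ∀ q ∈ Ω, (∀ i, p i ≤ 2 * q i) →
      ((4 : ℝ) • (H q)⁻¹ - (H p)⁻¹).PosSemidef)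
    (pt : Fin K → ℝ) (hpt : pt ∈ Ω)
    (l : Fin K → ℝ)
    (pt1 : Fin K → ℝ) (hpt1 : pt1 ∈ Ω)
    (hmin : ∀ q ∈ Ω,
      (∑ i, pt1 i * l i) + breg ψ pt1 pt ≤ (∑ i, q i * l i) + breg ψ q pt)
    (hz : ∃ z : ℝ, Real.sqrt (quadForm (H pt)⁻¹ (fun i => l i - z)) ≤ 1 / 8) :
    ∀ i, (1 / 2) * pt i ≤ pt1 i ∧ pt1 i ≤ 2 * pt i := by
  classical
  by_contra hbad
  push_neg at hbad
  obtain ⟨ib, hib⟩ := hbad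
  set v : Fin K → ℝ := pt1 - pt with hv
  have hvapp : ∀ j, v j = pt1 j - pt j := fun j => rfl
  have hptpos : ∀ j, 0 < pt j := hΩpos pt hpt
  -- the bad coordinate has a large move
  have hvib : (1/2) * pt ib < |v ib| := by
    by_cases hle : (1/2) * pt ib ≤ pt1 ib
    · have h2 := hib hle
      have : (1/2) * pt ib < v ib := by rw [hvapp]; nlinarith [hptpos ib]
      exact lt_of_lt_of_le this (le_abs_self _)
    · push_neg at hle
      have : (1/2) * pt ib < -(v ib) := by rw [hvapp]; nlinarith [hptpos ib]
      exact lt_of_lt_of_le this (neg_le_abs _)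
  -- construct the hitting parameter s
  set S : Finset (Fin K) := Finset.univ.filter (fun j => v j ≠ 0) with hS
  have hibS : ib ∈ S := by
    simp only [hS, Finset.mem_filter, Finset.mem_univ, true_and]
    intro h0
    rw [h0] at hvib; simp at hvib; nlinarith [hptpos ib]
  have hSne : S.Nonempty := ⟨ib, hibS⟩
  set s : ℝ := S.inf' hSne (fun j => pt j / (2 * |v j|)) with hs
  have hvposS : ∀ j ∈ S, 0 < |v j| := by
    intro j hj
    simp only [hS, Finset.mem_filter, Finset.mem_univ, true_and] at hj
    exact abs_pos.2 hj
  have hspos : 0 < s := by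
    rw [hs, Finset.lt_inf'_iff]
    intro j hj
    exact div_pos (hptpos j) (by linarith [hvposS j hj])
  have hslt1 : s < 1 := by
    have h1 : s ≤ pt ib / (2 * |v ib|) := Finset.inf'_le _ hibS
    have h2 : pt ib / (2 * |v ib|) < 1 := by
      rw [div_lt_one (by linarith [hvposS ib hibS])]
      linarith
    linarith
  have hsle : ∀ j, s * |v j| ≤ (1/2) * pt j := by
    intro j
    by_cases h0 : v j = 0
    · rw [h0]; simp; linarith [hptpos j]
    · have hj : j ∈ S := by simp [hS, h0]
      have h1 : s ≤ pt j / (2 * |v j|) := Finset.inf'_le _ hj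
      have h2 := hvposS j hj
      rw [← le_div_iff₀ h2]
      calc s ≤ pt j / (2 * |v j|) := h1
        _ = (1/2) * pt j / |v j| := by ring
  obtain ⟨i₀, hi₀S, hseq'⟩ := S.exists_mem_eq_inf' hSne (fun j => pt j / (2 * |v j|))
  have hvi₀ := hvposS i₀ hi₀S
  have hseq : s * |v i₀| = (1/2) * pt i₀ := by
    rw [hs, hseq']
    field_simp
  -- the segment
  set c : ℝ → (Fin K → ℝ) := fun t => pt + t • v with hc
  have hcΩ : ∀ t ∈ Set.Icc (0:ℝ) 1, c t ∈ Ω := by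
    intro t ht
    have heq : c t = (1 - t) • pt + t • pt1 := by
      rw [hc]; simp only [hv]; module
    rw [heq]
    exact hΩconv hpt hpt1 (by linarith [ht.2]) ht.1 (by ring)
  have hcU : ∀ t ∈ Set.Icc (0:ℝ) 1, c t ∈ U := fun t ht => hΩU (hcΩ t ht)
  have hcderiv : ∀ t : ℝ, HasDerivAt c v t := by
    intro t
    have h1 : HasDerivAt (fun t : ℝ => t • v) ((1:ℝ) • v) t := (hasDerivAt_id t).smul_const v
    simpa [hc] using h1.const_add pt
  -- derivatives of ψ along the segment
  have hψd : ∀ x ∈ U, HasFDerivAt ψ (fderiv ℝ ψ x) x := fun x hx =>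
    ((hψ.differentiableOn (by norm_num)).differentiableAt (hUopen.mem_nhds hx)).hasFDerivAt
  have hψ' : ContDiffOn ℝ 1 (fderiv ℝ ψ) U := hψ.fderiv_of_isOpen hUopen (by norm_num)
  have hψ'd : ∀ x ∈ U, HasFDerivAt (fderiv ℝ ψ) (fderiv ℝ (fderiv ℝ ψ) x) x := fun x hx =>
    ((hψ'.differentiableOn (by norm_num)).differentiableAt (hUopen.mem_nhds hx)).hasFDerivAt
  set φ : ℝ → ℝ := fun t => ψ (c t) with hφ
  set φ₁ : ℝ → ℝ := fun t => fderiv ℝ ψ (c t) v with hφ₁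
  set φ₂ : ℝ → ℝ := fun t => quadForm (H (c t)) v with hφ₂
  have hφd : ∀ t : ℝ, c t ∈ U → HasDerivAt φ (φ₁ t) t := fun t ht =>
    (hψd _ ht).comp_hasDerivAt t (hcderiv t)
  have hφ₁d : ∀ t : ℝ, c t ∈ U → HasDerivAt φ₁ (φ₂ t) t := by
    intro t ht
    have h1 : HasDerivAt (fun u : ℝ => fderiv ℝ ψ (c u)) (fderiv ℝ (fderiv ℝ ψ) (c t) v) t :=
      (hψ'd _ ht).comp_hasDerivAt t (hcderiv t)
    have h2 := h1.clm_apply (hasDerivAt_const t v)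
    have h3 : φ₂ t = fderiv ℝ (fderiv ℝ ψ) (c t) v v := (hHess (c t) ht v v).symm
    simpa [h3] using h2
  -- convexity of φ on [0,1]
  have hIoo : Set.Ioo (0:ℝ) 1 ⊆ Set.Icc (0:ℝ) 1 := Set.Ioo_subset_Icc_self
  have hderiv_eq : ∀ t ∈ Set.Ioo (0:ℝ) 1, deriv φ t = φ₁ t := fun t ht =>
    (hφd t (hcU t (hIoo ht))).deriv
  have hderiv2 : ∀ t ∈ Set.Ioo (0:ℝ) 1, HasDerivAt (deriv φ) (φ₂ t) t := by
    intro t ht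
    have hev : φ₁ =ᶠ[nhds t] deriv φ := by
      filter_upwards [isOpen_Ioo.mem_nhds ht] with y hy
      exact (hderiv_eq y hy).symm
    exact (hφ₁d t (hcU t (hIoo ht))).congr_of_eventuallyEq hev.symm
  have hconv : ConvexOn ℝ (Set.Icc (0:ℝ) 1) φ := by
    apply convexOn_of_deriv2_nonneg (convex_Icc 0 1)
    · exact fun t ht => (hφd t (hcU t ht)).continuousAt.continuousWithinAt
    · rw [interior_Icc]
      exact fun t ht => (hφd t (hcU t (hIoo ht))).differentiableAt.differentiableWithinAt
    · rw [interior_Icc]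
      exact fun t ht => (hderiv2 t ht).differentiableAt.differentiableWithinAt
    · rw [interior_Icc]
      intro t ht
      have : deriv^[2] φ t = deriv (deriv φ) t := rfl
      rw [this, (hderiv2 t ht).deriv]
      exact qf_nonneg (hPD (c t) (hcΩ t (hIoo ht))).posSemidef v
  -- Taylor with Lagrange remainder on [0, s] via Rolle
  have hIccs : Set.Icc (0:ℝ) s ⊆ Set.Icc (0:ℝ) 1 :=
    Set.Icc_subset_Icc le_rfl hslt1.le
  set lam : ℝ := (φ s - φ 0 - φ₁ 0 * s) / s^2 with hlam
  set G : ℝ → ℝ := fun t => φ s - φ t - φ₁ t * (s - t) - lam * (s - t)^2 with hG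
  have hGd : ∀ t ∈ Set.Icc (0:ℝ) s, HasDerivAt G ((s - t) * (2*lam - φ₂ t)) t := by
    intro t ht
    have htU : c t ∈ U := hcU t (hIccs ht)
    have h1 : HasDerivAt (fun u : ℝ => s - u) (-1) t := by
      simpa using (hasDerivAt_id t).const_sub s
    have h2 : HasDerivAt (fun u : ℝ => φ₁ u * (s - u)) (φ₂ t * (s - t) + φ₁ t * (-1)) t :=
      (hφ₁d t htU).mul h1
    have h3 : HasDerivAt (fun u : ℝ => lam * (s - u)^2)
        (lam * ((2:ℕ) * (s - t)^1 * (-1))) t := (h1.pow 2).const_mul lam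
    have h4 := (((hasDerivAt_const t (φ s)).sub (hφd t htU)).sub h2).sub h3
    refine HasDerivAt.congr_deriv h4 ?_
    push_cast
    ring
  have hGcont : ContinuousOn G (Set.Icc (0:ℝ) s) := fun t ht =>
    (hGd t ht).continuousAt.continuousWithinAt
  have hG0 : G 0 = 0 := by
    rw [hG]
    simp only [sub_zero]
    rw [hlam]
    field_simp
    ring
  have hGs : G s = 0 := by rw [hG]; simp
  obtain ⟨ξ, hξmem, hξ0⟩ := exists_hasDerivAt_eq_zero hspos hGcont (hG0.trans hGs.symm)
    (fun x hx => hGd x (Set.Ioo_subset_Icc_self hx))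
  have hξs : φ₂ ξ = 2 * lam := by
    rcases mul_eq_zero.1 hξ0 with h | h
    · exact absurd h (by nlinarith [hξmem.2])
    · linarith
  -- endpoint identifications
  have hc0 : c 0 = pt := by rw [hc]; simp
  have hc1 : c 1 = pt1 := by rw [hc]; simp [hv]
  have hcspt : c s - pt = s • v := by rw [hc]; simp
  have hbreg_s : breg ψ (c s) pt = φ s - φ 0 - s * φ₁ 0 := by
    rw [breg, hcspt]
    simp only [hφ, hφ₁, hc0, map_smul, smul_eq_mul]
  have hbreg1 : breg ψ pt1 pt = φ 1 - φ 0 - φ₁ 0 := by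
    rw [breg]
    simp only [hφ, hφ₁, hc0, hc1, hv]
  have hbreg0 : breg ψ pt pt = 0 := by rw [breg]; simp
  have hA : φ 1 - φ 0 - φ₁ 0 ≤ (∑ i, pt i * l i) - (∑ i, pt1 i * l i) := by
    have := hmin pt hpt
    rw [hbreg0, hbreg1] at this
    linarith
  have hφconv : φ s ≤ (1 - s) * φ 0 + s * φ 1 := by
    have h0 : (0:ℝ) ∈ Set.Icc (0:ℝ) 1 := by constructor <;> norm_num
    have h1 : (1:ℝ) ∈ Set.Icc (0:ℝ) 1 := by constructor <;> norm_num
    have := hconv.2 h0 h1 (by linarith : (0:ℝ) ≤ 1 - s) hspos.le (by ring)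
    simpa using this
  have hvl : (∑ i, pt1 i * l i) - (∑ i, pt i * l i) = ∑ i, v i * l i := by
    rw [← Finset.sum_sub_distrib]
    refine Finset.sum_congr rfl fun i _ => by rw [hvapp]; ring
  have hFs : breg ψ (c s) pt ≤ -(s * (∑ i, v i * l i)) := by
    rw [hbreg_s]
    have h5 := mul_le_mul_of_nonneg_left hA hspos.le
    nlinarith [hφconv, hvl]
  have hbregval : breg ψ (c s) pt = 1/2 * (s^2 * φ₂ ξ) := by
    rw [hbreg_s, hξs, hlam]
    field_simp
  -- the intermediate point and its bounds
  have hξIcc : ξ ∈ Set.Icc (0:ℝ) 1 := ⟨hξmem.1.le, (hξmem.2.le).trans hslt1.le⟩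
  have hξΩ : c ξ ∈ Ω := hcΩ ξ hξIcc
  have hband3 : ∀ j, c ξ j ≤ (3/2) * pt j := by
    intro j
    have h1 : ξ * v j ≤ s * |v j| := by
      calc ξ * v j ≤ ξ * |v j| := mul_le_mul_of_nonneg_left (le_abs_self _) hξmem.1.le
        _ ≤ s * |v j| := mul_le_mul_of_nonneg_right hξmem.2.le (abs_nonneg _)
    have h2 := hsle j
    show pt j + ξ * v j ≤ (3/2) * pt j
    linarith
  have hband : ∀ j, c ξ j ≤ 2 * pt j := fun j =>
    le_trans (hband3 j) (by nlinarith [hptpos j])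
  have hQeq : φ₂ ξ = quadForm (H (c ξ)) v := rfl
  have hQ0 : 0 ≤ φ₂ ξ := by rw [hQeq]; exact qf_nonneg (hPD _ hξΩ).posSemidef v
  -- the shifted loss
  obtain ⟨z, hzle⟩ := hz
  set w : Fin K → ℝ := fun i => l i - z with hw
  have hq0 : 0 ≤ quadForm (H pt)⁻¹ w := qf_nonneg (hPD pt hpt).inv.posSemidef w
  have hq64 : quadForm (H pt)⁻¹ w ≤ 1/64 := by
    have h3 := Real.sq_sqrt hq0
    nlinarith [Real.sqrt_nonneg (quadForm (H pt)⁻¹ w), hzle]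
  have hqξ : quadForm (H (c ξ))⁻¹ w ≤ 1/16 := by
    have hpsd := hii (c ξ) hξΩ pt hpt hband
    have h6 := qf_nonneg hpsd w
    rw [qf_sub, qf_smul] at h6
    linarith
  -- sums of coordinates
  have hvsum : ∑ i, v i = 0 := by
    have hsum1 : ∑ i, pt1 i = 1 := (hΩsub hpt1).2
    have hsum0 : ∑ i, pt i = 1 := (hΩsub hpt).2
    simp only [hvapp]
    rw [Finset.sum_sub_distrib, hsum1, hsum0, sub_self]
  have hvlw : ∑ i, v i * l i = ∑ i, v i * w i := by
    have h4 : ∑ i, v i * w i = (∑ i, v i * l i) - z * ∑ i, v i := by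
      rw [Finset.mul_sum, ← Finset.sum_sub_distrib]
      refine Finset.sum_congr rfl fun i _ => ?_
      simp only [hw]; ring
    rw [h4, hvsum]; ring
  -- Cauchy-Schwarz
  have hqiξ0 : 0 ≤ quadForm (H (c ξ))⁻¹ w := qf_nonneg (hPD (c ξ) hξΩ).inv.posSemidef w
  have hcs := qf_cs (hPD (c ξ) hξΩ) w v
  have hwv : dotProduct w v = ∑ i, v i * w i := by
    simp only [dotProduct]
    exact Finset.sum_congr rfl fun i _ => mul_comm _ _
  have hDsq : (∑ i, v i * l i)^2 ≤ 1/16 * φ₂ ξ := by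
    rw [hvlw, hQeq]
    calc (∑ i, v i * w i)^2 = (dotProduct w v)^2 := by rw [hwv]
      _ ≤ quadForm (H (c ξ))⁻¹ w * quadForm (H (c ξ)) v := hcs
      _ ≤ 1/16 * quadForm (H (c ξ)) v := by
          rw [← hQeq]
          exact mul_le_mul_of_nonneg_right hqξ hQ0
  set r : ℝ := Real.sqrt (φ₂ ξ) with hr
  have hr2 : r^2 = φ₂ ξ := Real.sq_sqrt hQ0
  have hrn : 0 ≤ r := Real.sqrt_nonneg _
  have habs : |∑ i, v i * l i| ≤ 1/4 * r := by
    have h10 : |∑ i, v i * l i| = Real.sqrt ((∑ i, v i * l i)^2) :=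
      (Real.sqrt_sq_eq_abs _).symm
    have h11 : (1:ℝ)/16 * φ₂ ξ = (1/4*r)^2 := by rw [← hr2]; ring
    rw [h10]
    calc Real.sqrt ((∑ i, v i * l i)^2) ≤ Real.sqrt (1/16 * φ₂ ξ) := Real.sqrt_le_sqrt hDsq
      _ = 1/4 * r := by rw [h11]; exact Real.sqrt_sq (by linarith)
  -- upper bound
  have hup : 1/2 * (s^2 * φ₂ ξ) ≤ s * (1/4 * r) := by
    calc 1/2 * (s^2 * φ₂ ξ) = breg ψ (c s) pt := hbregval.symm
      _ ≤ -(s * (∑ i, v i * l i)) := hFs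
      _ = s * (-(∑ i, v i * l i)) := by ring
      _ ≤ s * |∑ i, v i * l i| := mul_le_mul_of_nonneg_left (neg_le_abs _) hspos.le
      _ ≤ s * (1/4 * r) := mul_le_mul_of_nonneg_left habs hspos.le
  -- lower bound
  have hξpos : 0 < c ξ i₀ := hΩpos _ hξΩ i₀
  have h3b : c ξ i₀ ≤ 3/2 * pt i₀ := hband3 i₀
  have hsv : s^2 * v i₀^2 = 1/4 * pt i₀^2 := by
    have h := congrArg (fun x : ℝ => x^2) hseq
    calc s^2 * v i₀^2 = (s * |v i₀|)^2 := by rw [mul_pow, sq_abs]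
      _ = (1/2 * pt i₀)^2 := h
      _ = 1/4 * pt i₀^2 := by ring
  have hlow : 1 ≤ s^2 * φ₂ ξ := by
    have hdiagle : quadForm (Matrix.diagonal fun i => C₁ / (c ξ) i ^ 2) v ≤ φ₂ ξ := by
      have h8 := qf_nonneg (hi (c ξ) hξΩ) v
      rw [qf_sub] at h8
      rw [hQeq]; linarith
    have hdiag := qf_diag (fun i => C₁ / (c ξ) i ^ 2) v
    have hterm : (C₁ / (c ξ) i₀ ^ 2) * v i₀^2 ≤ ∑ i, (C₁ / (c ξ) i ^ 2) * v i ^ 2 := by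
      refine Finset.single_le_sum (f := fun i => (C₁ / (c ξ) i ^ 2) * v i ^ 2) (fun i _ => ?_) (Finset.mem_univ i₀)
      have := hΩpos _ hξΩ i
      positivity
    have hsq3 : (c ξ i₀)^2 ≤ 9/4 * pt i₀^2 := by nlinarith only [h3b, hξpos, hptpos i₀]
    have h9 : 1 ≤ C₁ / (c ξ i₀)^2 * v i₀^2 * s^2 := by
      rw [div_mul_eq_mul_div, div_mul_eq_mul_div, le_div_iff₀ (by positivity)]
      nlinarith only [hsv, hC₁, hsq3, hptpos i₀, sq_nonneg (pt i₀), mul_nonneg (sub_nonneg.2 hC₁) (sq_nonneg (pt i₀))]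
    nlinarith only [hdiagle, hterm, hdiag, h9, sq_nonneg s, hQ0]
  -- contradiction
  have hX : s^2 * φ₂ ξ = (s*r)^2 := by rw [← hr2]; ring
  rw [hX] at hup hlow
  nlinarith only [hup, hlow, mul_nonneg hspos.le hrn, sq_nonneg (s*r - 1)]
end

section
/- Let K ≥ 2 and let p ∈ Δ(K) satisfy 0 < p_i for every i ∈ [K]. Let ℓ ∈ ℝ^K satisfy 0 ≤ ℓ_i ≤ max{1/p_i, 1/(1 − p_i)} for every i. Then there exists z ≥ 0 such that Σ_{i=1}^K p_i²·(ℓ_i − z)² ≤ K. -/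
open Finset

/-- Existence of a loss shift making the weighted squared norm at most `K`
(Lemma 4 of the paper). -/
theorem stmt2 (K : ℕ) (hK : 2 ≤ K)
    (p : Fin K → ℝ) (hp : p ∈ stdSimplex ℝ (Fin K)) (hpos : ∀ i, 0 < p i)
    (l : Fin K → ℝ)
    (hl : ∀ i, 0 ≤ l i ∧ l i ≤ max (1 / p i) (1 / (1 - p i))) :
    ∃ z : ℝ, 0 ≤ z ∧ ∑ i, p i ^ 2 * (l i - z) ^ 2 ≤ (K : ℝ) := by
  have hsum : ∑ i, p i = 1 := hp.2
  by_cases h : ∃ j, 1/2 < p j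
  · obtain ⟨j, hj⟩ := h
    refine ⟨l j, (hl j).1, ?_⟩
    have hb : p j < 1 := by
      -- since K ≥ 2 there is another index with positive prob
      have : ∃ i, i ≠ j := by
        have : Nontrivial (Fin K) := Fin.nontrivial_iff_two_le.mpr hK
        exact exists_ne j
      obtain ⟨i, hij⟩ := this
      have hle : p i + p j ≤ 1 := by
        have h1 : ∑ x ∈ ({i, j} : Finset (Fin K)), p x ≤ ∑ x, p x :=
          Finset.sum_le_sum_of_subset_of_nonneg (Finset.subset_univ _)
            (fun x _ _ => (hpos x).le)
        rwa [Finset.sum_pair hij, hsum] at h1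
      linarith [hpos i]
    have hlj : l j ≤ 1 / (1 - p j) := by
      have h1 : (1 : ℝ) / p j ≤ 1 / (1 - p j) :=
        one_div_le_one_div_of_le (by linarith) (by linarith)
      exact le_trans (hl j).2 (max_le h1 le_rfl)
    calc ∑ i, p i ^ 2 * (l i - l j) ^ 2 ≤ ∑ _i : Fin K, (1 : ℝ) := by
          apply Finset.sum_le_sum
          intro i _
          by_cases hij : i = j
          · simp [hij]
          · have hle : p i + p j ≤ 1 := by
              have h1 : ∑ x ∈ ({i, j} : Finset (Fin K)), p x ≤ ∑ x, p x :=
                Finset.sum_le_sum_of_subset_of_nonneg (Finset.subset_univ _)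
                  (fun x _ _ => (hpos x).le)
              rwa [Finset.sum_pair hij, hsum] at h1
            have hpi : p i ≤ 1 - p j := by linarith
            have hpi2 : p i ≤ 1 / 2 := by linarith
            have ha : p i * l i ≤ 1 := by
              have h1 : (1 : ℝ) / (1 - p i) ≤ 1 / p i :=
                one_div_le_one_div_of_le (hpos i) (by linarith)
              have h2 : l i ≤ 1 / p i := le_trans (hl i).2 (max_le le_rfl h1)
              calc p i * l i ≤ p i * (1 / p i) :=
                    mul_le_mul_of_nonneg_left h2 (hpos i).le
                _ = 1 := by rw [mul_one_div]; exact div_self (hpos i).ne'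
            have hb' : p i * l j ≤ 1 := by
              calc p i * l j ≤ (1 - p j) * (1 / (1 - p j)) :=
                    mul_le_mul hpi hlj (hl j).1 (by linarith)
                _ = 1 := by rw [mul_one_div]; exact div_self (ne_of_gt (by linarith : (0:ℝ) < 1 - p j))
            have ha0 : 0 ≤ p i * l i := mul_nonneg (hpos i).le (hl i).1
            have hb0 : 0 ≤ p i * l j := mul_nonneg (hpos i).le (hl j).1
            nlinarith [sq_nonneg (p i * l i - p i * l j)]
      _ = (K : ℝ) := by simp
  · push_neg at h
    refine ⟨0, le_rfl, ?_⟩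
    calc ∑ i, p i ^ 2 * (l i - 0) ^ 2 ≤ ∑ _i : Fin K, (1 : ℝ) := by
          apply Finset.sum_le_sum
          intro i _
          have h1 : (1 : ℝ) / (1 - p i) ≤ 1 / p i :=
            one_div_le_one_div_of_le (hpos i) (by linarith [h i])
          have h2 : l i ≤ 1 / p i := le_trans (hl i).2 (max_le le_rfl h1)
          have ha : p i * l i ≤ 1 := by
            calc p i * l i ≤ p i * (1 / p i) :=
                  mul_le_mul_of_nonneg_left h2 (hpos i).le
              _ = 1 := by rw [mul_one_div]; exact div_self (hpos i).ne'
          have ha0 : 0 ≤ p i * l i := mul_nonneg (hpos i).le (hl i).1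
          nlinarith
      _ = (K : ℝ) := by simp
end

section
/- Let K ≥ 2, let S ⊆ [K], and let p ∈ Δ(K) satisfy 0 < p_i for every i ∈ [K]. Let ℓ ∈ ℝ^K be nonnegative and satisfy ℓ_i·(1 − p_i) ≤ 1 for every i ∉ S. Then there exists z ≥ 0 such that Σ_{i=1}^K p_i·(ℓ_i − z)² ≤ Σ_{i∈S} p_i·ℓ_i² + 2·Σ_{i∉S} p_i·ℓ_i. -/
open Finset

/-- Loss-shifting bound used in the proof of Theorem 2 of the paper. -/
theorem stmt3 (K : ℕ) (hK : 2 ≤ K) (S : Finset (Fin K))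
    (p : Fin K → ℝ) (hp : p ∈ stdSimplex ℝ (Fin K)) (hpos : ∀ i, 0 < p i)
    (l : Fin K → ℝ) (hl0 : ∀ i, 0 ≤ l i)
    (hl : ∀ i ∉ S, l i * (1 - p i) ≤ 1) :
    ∃ z : ℝ, 0 ≤ z ∧
      ∑ i, p i * (l i - z) ^ 2 ≤
        ∑ i ∈ S, p i * l i ^ 2 + 2 * ∑ i ∈ Sᶜ, p i * l i := by
  set z : ℝ := ∑ i, p i * l i with hzdef
  have hnn : ∀ i : Fin K, 0 ≤ p i * l i := fun i => mul_nonneg (hpos i).le (hl0 i)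
  have hz0 : 0 ≤ z := Finset.sum_nonneg fun i _ => hnn i
  have hpsum : ∑ i, p i = 1 := hp.2
  refine ⟨z, hz0, ?_⟩
  have expand : ∑ i, p i * (l i - z) ^ 2 = ∑ i, p i * l i ^ 2 - z ^ 2 := by
    have h1 : ∀ i ∈ Finset.univ (α := Fin K),
        p i * (l i - z) ^ 2 = p i * l i ^ 2 - 2 * z * (p i * l i) + z ^ 2 * p i :=
      fun i _ => by ring
    rw [Finset.sum_congr rfl h1, Finset.sum_add_distrib, Finset.sum_sub_distrib,
      ← Finset.mul_sum, ← Finset.mul_sum, hpsum, ← hzdef]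
    ring
  have hsplit : ∑ i, p i * l i ^ 2 = ∑ i ∈ S, p i * l i ^ 2 + ∑ i ∈ Sᶜ, p i * l i ^ 2 :=
    (Finset.sum_add_sum_compl S _).symm
  rw [expand, hsplit]
  have hle : ∑ i ∈ Sᶜ, p i * l i ^ 2 ≤ ∑ i ∈ Sᶜ, (p i * l i + z * (p i * l i)) := by
    refine Finset.sum_le_sum fun i hi => ?_
    have hiS : i ∉ S := Finset.mem_compl.mp hi
    have hl1 : l i ≤ 1 + p i * l i := by nlinarith [hl i hiS]
    have hpz : p i * l i ≤ z :=
      Finset.single_le_sum (f := fun j => p j * l j) (fun j _ => hnn j) (Finset.mem_univ i)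
    nlinarith [hnn i, hl0 i]
  have hcz : ∑ i ∈ Sᶜ, p i * l i ≤ z :=
    Finset.sum_le_sum_of_subset_of_nonneg (Finset.subset_univ _) (fun i _ _ => hnn i)
  have hcz0 : 0 ≤ ∑ i ∈ Sᶜ, p i * l i := Finset.sum_nonneg fun i _ => hnn i
  rw [Finset.sum_add_distrib, ← Finset.mul_sum] at hle
  nlinarith [hle, hcz, hcz0, hz0]
end

section
/- Let K ≥ 2, let S ⊆ [K], and let p ∈ Δ(K) satisfy 0 < p_i for every i ∈ [K]. Let ℓ ∈ ℝ^K be nonnegative and satisfy p_i·ℓ_i ≤ 1 for every i ∈ S and ℓ_i·(1 − p_i) ≤ 1 for every i ∉ S. Then there exists z ≥ 0 such that Σ_{i∈S} p_i²·(ℓ_i − z)² + Σ_{i∉S} p_i·(ℓ_i − z)² ≤ 2·Σ_{i=1}^K p_i·ℓ_i. -/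
open Finset

/-- Loss-shifting bound used in the proof of Theorem 3 of the paper. -/
theorem stmt4 (K : ℕ) (hK : 2 ≤ K) (S : Finset (Fin K))
    (p : Fin K → ℝ) (hp : p ∈ stdSimplex ℝ (Fin K)) (hpos : ∀ i, 0 < p i)
    (l : Fin K → ℝ) (hl0 : ∀ i, 0 ≤ l i)
    (hlS : ∀ i ∈ S, p i * l i ≤ 1)
    (hlSc : ∀ i ∉ S, l i * (1 - p i) ≤ 1) :
    ∃ z : ℝ, 0 ≤ z ∧
      ∑ i ∈ S, p i ^ 2 * (l i - z) ^ 2 + ∑ i ∈ Sᶜ, p i * (l i - z) ^ 2 ≤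
        2 * ∑ i, p i * l i := by
  obtain ⟨hp0, hp1⟩ := hp
  by_cases hbig : ∃ j ∈ Sᶜ, (1:ℝ)/2 < p j
  · obtain ⟨j, hjc, hj⟩ := hbig
    have hjS : j ∉ S := by simpa using hjc
    refine ⟨l j, hl0 j, ?_⟩
    have hj1 : l j * (1 - p j) ≤ 1 := hlSc j hjS
    have hsum1 : p j + ∑ k ∈ univ.erase j, p k = 1 := by
      rw [Finset.add_sum_erase univ p (mem_univ j)]; exact hp1
    have hple : ∀ i : Fin K, i ≠ j → p i ≤ 1 - p j := by
      intro i hij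
      have h2 : p i ≤ ∑ k ∈ univ.erase j, p k :=
        Finset.single_le_sum (fun k _ => (hpos k).le) (mem_erase.2 ⟨hij, mem_univ i⟩)
      linarith
    have hp1i : ∀ i : Fin K, p i ≤ 1 := by
      intro i
      by_cases hij : i = j
      · subst hij
        have h2 : (0:ℝ) ≤ ∑ k ∈ univ.erase i, p k :=
          Finset.sum_nonneg (fun k _ => (hpos k).le)
        linarith
      · have := hple i hij; linarith [hpos j]
    -- pointwise bound for i ∈ S
    have hS : ∀ i ∈ S, p i ^ 2 * (l i - l j) ^ 2 ≤ 2 * (p i * l i) + p i * l j ^ 2 := by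
      intro i hi
      have h1 : p i * l i ≤ 1 := hlS i hi
      have h0 : 0 ≤ p i * l i := mul_nonneg (hpos i).le (hl0 i)
      have h2 : 0 ≤ p i ^ 2 * (l i * l j) :=
        mul_nonneg (sq_nonneg _) (mul_nonneg (hl0 i) (hl0 j))
      have h3 : 0 ≤ (p i * l j ^ 2) * (1 - p i) :=
        mul_nonneg (mul_nonneg (hpos i).le (sq_nonneg _)) (by linarith [hp1i i])
      nlinarith [mul_nonneg h0 (by linarith : (0:ℝ) ≤ 2 - p i * l i)]
    -- pointwise bound for i ∈ Sᶜ, i ≠ j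
    have hSc : ∀ i ∈ Sᶜ, i ≠ j → p i * (l i - l j) ^ 2 ≤ 2 * (p i * l i) + p i * l j ^ 2 := by
      intro i hi hij
      have hiS : i ∉ S := by simpa using hi
      have h1 : l i * (1 - p i) ≤ 1 := hlSc i hiS
      have h2 : p i ≤ 1 - p j := hple i hij
      have hl2 : l i ≤ 2 := by nlinarith [hl0 i]
      nlinarith [mul_nonneg (mul_nonneg (hpos i).le (hl0 i))
        (by linarith [hl0 j] : (0:ℝ) ≤ 2 + 2 * l j - l i)]
    -- the j-th term vanishes
    have hBzero : (fun i => p i * (l i - l j) ^ 2) j = 0 := by simp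
    have hBrw : ∑ i ∈ Sᶜ, p i * (l i - l j) ^ 2
        = ∑ i ∈ Sᶜ.erase j, p i * (l i - l j) ^ 2 :=
      (Finset.sum_erase Sᶜ hBzero).symm
    have hkey : ∑ i ∈ S, p i ^ 2 * (l i - l j) ^ 2 + ∑ i ∈ Sᶜ, p i * (l i - l j) ^ 2
        ≤ ∑ i ∈ univ.erase j, (2 * (p i * l i) + p i * l j ^ 2) := by
      rw [hBrw]
      have hsub : S ⊆ univ.erase j := fun i hi =>
        mem_erase.2 ⟨fun h => hjS (h ▸ hi), mem_univ i⟩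
      have hset : Sᶜ.erase j = univ.erase j \ S := by
        ext i
        simp only [mem_erase, mem_compl, mem_sdiff, mem_univ, true_and, and_true]
      have hsplit : ∑ i ∈ S, (2 * (p i * l i) + p i * l j ^ 2)
          + ∑ i ∈ Sᶜ.erase j, (2 * (p i * l i) + p i * l j ^ 2)
          = ∑ i ∈ univ.erase j, (2 * (p i * l i) + p i * l j ^ 2) := by
        rw [hset, add_comm]
        exact Finset.sum_sdiff hsub
      calc ∑ i ∈ S, p i ^ 2 * (l i - l j) ^ 2 + ∑ i ∈ Sᶜ.erase j, p i * (l i - l j) ^ 2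
          ≤ ∑ i ∈ S, (2 * (p i * l i) + p i * l j ^ 2)
            + ∑ i ∈ Sᶜ.erase j, (2 * (p i * l i) + p i * l j ^ 2) := by
            refine add_le_add (Finset.sum_le_sum hS) (Finset.sum_le_sum ?_)
            intro i hi
            exact hSc i (mem_of_mem_erase hi) (ne_of_mem_erase hi)
        _ = ∑ i ∈ univ.erase j, (2 * (p i * l i) + p i * l j ^ 2) := hsplit
    have e1 : ∑ i ∈ univ.erase j, (2 * (p i * l i) + p i * l j ^ 2)
        = 2 * (∑ i ∈ univ.erase j, p i * l i) + (∑ i ∈ univ.erase j, p i) * l j ^ 2 := by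
      rw [Finset.sum_add_distrib, Finset.mul_sum, Finset.sum_mul]
    have e2 : p j * l j + ∑ i ∈ univ.erase j, p i * l i = ∑ i, p i * l i :=
      Finset.add_sum_erase univ (fun i => p i * l i) (mem_univ j)
    have hfin : (∑ i ∈ univ.erase j, p i) * l j ^ 2 ≤ 2 * (p j * l j) := by
      have h3 : ∑ i ∈ univ.erase j, p i = 1 - p j := by linarith
      rw [h3]
      nlinarith [hl0 j]
    calc ∑ i ∈ S, p i ^ 2 * (l i - l j) ^ 2 + ∑ i ∈ Sᶜ, p i * (l i - l j) ^ 2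
        ≤ 2 * (∑ i ∈ univ.erase j, p i * l i) + (∑ i ∈ univ.erase j, p i) * l j ^ 2 := by
          rw [← e1]; exact hkey
      _ ≤ 2 * (∑ i ∈ univ.erase j, p i * l i) + 2 * (p j * l j) := by linarith
      _ = 2 * ∑ i, p i * l i := by rw [← e2]; ring
  · push_neg at hbig
    refine ⟨0, le_refl 0, ?_⟩
    have hS : ∀ i ∈ S, p i ^ 2 * (l i - 0) ^ 2 ≤ 2 * (p i * l i) := by
      intro i hi
      have h1 : p i * l i ≤ 1 := hlS i hi
      have h0 : 0 ≤ p i * l i := mul_nonneg (hpos i).le (hl0 i)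
      nlinarith [mul_nonneg h0 (by linarith : (0:ℝ) ≤ 1 - p i * l i)]
    have hSc : ∀ i ∈ Sᶜ, p i * (l i - 0) ^ 2 ≤ 2 * (p i * l i) := by
      intro i hi
      have hiS : i ∉ S := by simpa using hi
      have h1 : l i * (1 - p i) ≤ 1 := hlSc i hiS
      have h2 : p i ≤ 1/2 := hbig i hi
      have hl2 : l i ≤ 2 := by nlinarith [hl0 i]
      nlinarith [mul_nonneg (mul_nonneg (hpos i).le (hl0 i))
        (by linarith : (0:ℝ) ≤ 2 - l i)]
    calc ∑ i ∈ S, p i ^ 2 * (l i - 0) ^ 2 + ∑ i ∈ Sᶜ, p i * (l i - 0) ^ 2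
        ≤ ∑ i ∈ S, 2 * (p i * l i) + ∑ i ∈ Sᶜ, 2 * (p i * l i) :=
          add_le_add (Finset.sum_le_sum hS) (Finset.sum_le_sum hSc)
      _ = ∑ i, 2 * (p i * l i) := Finset.sum_add_sum_compl S _
      _ = 2 * ∑ i, p i * l i := by rw [Finset.mul_sum]
end

section
/- Fix integers K ≥ 2 and T ≥ 2K, a subset S ⊆ [K], a real η > 0, and set c = 64K. Let Ω = {p ∈ Δ(K) : p_i ≥ 1/T for all i} and ψ(p) = (1/η)·Σ_{i=1}^K p_i ln p_i + c·Σ_{i=1}^K ln(1/p_i). Let p_1 ∈ Ω, and for each t = 1,…,T let ℓ̂_t ∈ ℝ^K satisfy 0 ≤ ℓ̂_{t,i} ≤ 1/p_{t,i} for i ∈ S and 0 ≤ ℓ̂_{t,i} ≤ 1/(1 − p_{t,i}) for i ∉ S, and let p_{t+1} be a minimizer over Ω of p ↦ ⟨p, ℓ̂_t⟩ + D_ψ(p, p_t). Then for every u ∈ Ω: Σ_{t=1}^T ⟨p_t − u, ℓ̂_t⟩ ≤ D_ψ(u, p_1) + 8η·Σ_{t=1}^T Σ_{i∈S} p_{t,i}·ℓ̂_{t,i}²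 + 16η·Σ_{t=1}^T Σ_{i∉S} p_{t,i}·ℓ̂_{t,i}. -/
open Finset

open Real


noncomputable def De (x y : ℝ) : ℝ := x * log x - x * log y - x + y
noncomputable def Db (x y : ℝ) : ℝ := log y - log x + x / y - 1

lemma De_nonneg {x y : ℝ} (hx : 0 < x) (hy : 0 < y) : 0 ≤ De x y := by
  have h := Real.log_le_sub_one_of_pos (show 0 < y / x by positivity)
  rw [Real.log_div hy.ne' hx.ne'] at h
  have h2 : x * (log y - log x) ≤ x * (y/x - 1) := mul_le_mul_of_nonneg_left h hx.le
  have h3 : x * (y/x - 1) = y - x := by field_simp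
  unfold De; nlinarith

lemma Db_nonneg {x y : ℝ} (hx : 0 < x) (hy : 0 < y) : 0 ≤ Db x y := by
  have h := Real.log_le_sub_one_of_pos (show 0 < x / y by positivity)
  rw [Real.log_div hx.ne' hy.ne'] at h
  unfold Db; linarith

lemma mono_aux {a b : ℝ} (F F' : ℝ → ℝ) (hab : a ≤ b)
    (hd : ∀ t ∈ Set.Icc a b, HasDerivAt F (F' t) t)
    (h0 : ∀ t ∈ Set.Ioo a b, 0 ≤ F' t) : F a ≤ F b := by
  have hmono := monotoneOn_of_deriv_nonneg (convex_Icc a b)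
    (fun t ht => (hd t ht).continuousAt.continuousWithinAt)
    (by
      rw [interior_Icc]
      exact fun t ht => ((hd t (Set.Ioo_subset_Icc_self ht)).differentiableAt).differentiableWithinAt)
    (by
      rw [interior_Icc]
      intro t ht
      rw [(hd t (Set.Ioo_subset_Icc_self ht)).deriv]
      exact h0 t ht)
  exact hmono (Set.left_mem_Icc.2 hab) (Set.right_mem_Icc.2 hab) hab

lemma anti_aux {a b : ℝ} (F F' : ℝ → ℝ) (hab : a ≤ b)
    (hd : ∀ t ∈ Set.Icc a b, HasDerivAt F (F' t) t)
    (h0 : ∀ t ∈ Set.Ioo a b, F' t ≤ 0) : F b ≤ F a := by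
  have h := mono_aux (fun t => -F t) (fun t => -F' t) hab
    (fun t ht => (hd t ht).neg) (fun t ht => neg_nonneg.2 (h0 t ht))
  simp only [neg_le_neg_iff] at h
  exact h

lemma De_decrease {x y : ℝ} (hx : 0 < x) (hxy : x ≤ y) :
    (y - x)^2/(2*y) ≤ De x y := by
  have hy : 0 < y := lt_of_lt_of_le hx hxy
  have key : ∀ t ∈ Set.Icc x y,
      HasDerivAt (fun t => t * log t - t * log y - t + y - (y - t)^2/(2*y))
        (log t - log y + (y - t)/y) t := by
    intro t ht
    have ht0 : (0:ℝ) < t := lt_of_lt_of_le hx ht.1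
    have h1 := ((((Real.hasDerivAt_mul_log ht0.ne').sub
        (hasDerivAt_mul_const (log y))).sub (hasDerivAt_id t)).add_const y).sub
        ((((hasDerivAt_id t).const_sub y).pow 2).div_const (2*y))
    refine h1.congr_deriv ?_
    simp only [id_eq]
    field_simp
    ring
  have h0 : ∀ t ∈ Set.Ioo x y, log t - log y + (y - t)/y ≤ 0 := by
    intro t ht
    have ht0 : (0:ℝ) < t := lt_of_lt_of_le hx ht.1.le
    have h := Real.log_le_sub_one_of_pos (show 0 < t / y by positivity)
    rw [Real.log_div ht0.ne' hy.ne'] at h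
    have h2 : (y - t)/y = 1 - t/y := by field_simp
    rw [h2]; linarith
  have h := anti_aux _ _ hxy key h0
  have h2 : ((0:ℝ) - 0)^2/(2*y) = 0 := by norm_num
  unfold De
  simp only [sub_self] at h
  norm_num at h
  linarith

lemma De_increase {x y : ℝ} (hy : 0 < y) (hxy : y ≤ x) :
    (x - y)^2/(2*x) ≤ De x y := by
  have hx : 0 < x := lt_of_lt_of_le hy hxy
  -- G s = log s - log y - 1/2 + y^2/2 * (s^2)⁻¹ is ≥ 0 on [y,x]
  have hG : ∀ s ∈ Set.Icc y x, 0 ≤ log s - log y - 1/2 + y^2/2 * (s^2)⁻¹ := by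
    intro s hs
    have hs0 : (0:ℝ) < s := lt_of_lt_of_le hy hs.1
    have key : ∀ t ∈ Set.Icc y s,
        HasDerivAt (fun t => log t - log y - 1/2 + y^2/2 * (t^2)⁻¹)
          (1/t - y^2/t^3) t := by
      intro t ht
      have ht0 : (0:ℝ) < t := lt_of_lt_of_le hy ht.1
      have h2 := (((hasDerivAt_pow 2 t).inv (by positivity : t^2 ≠ 0)).const_mul (y^2/2))
      have h1 := (((Real.hasDerivAt_log ht0.ne').sub_const (log y)).sub_const (1/2)).add h2
      refine h1.congr_deriv ?_
      field_simp
      ring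
    have h0 : ∀ t ∈ Set.Ioo y s, 0 ≤ 1/t - y^2/t^3 := by
      intro t ht
      have ht0 : (0:ℝ) < t := lt_of_lt_of_le hy ht.1.le
      rw [sub_nonneg, div_le_div_iff₀ (by positivity) ht0]
      nlinarith [mul_nonneg (mul_nonneg (sub_nonneg.2 ht.1.le) (by linarith : (0:ℝ) ≤ t + y)) ht0.le]
    have h := mono_aux _ _ hs.1 key h0
    have h2 : log y - log y - 1/2 + y^2/2 * ((y^2)⁻¹ : ℝ) = 0 := by
      field_simp
      ring
    linarith
  have key : ∀ t ∈ Set.Icc y x,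
      HasDerivAt (fun t => t * log t - t * log y - t + y - (t - y)^2/(2*t))
        (log t - log y - 1/2 + y^2/2 * (t^2)⁻¹) t := by
    intro t ht
    have ht0 : (0:ℝ) < t := lt_of_lt_of_le hy ht.1
    have hnum : HasDerivAt (fun t : ℝ => (t - y)^2) (2*(t-y)^(2-1)*1) t :=
      (((hasDerivAt_id t).sub_const y).pow 2)
    have hden : HasDerivAt (fun t : ℝ => 2*t) 2 t := by
      simpa using (hasDerivAt_id t).const_mul (2:ℝ)
    have h2 := hnum.div hden (by positivity : 2*t ≠ 0)
    have h1 := ((((Real.hasDerivAt_mul_log ht0.ne').sub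
        (hasDerivAt_mul_const (log y))).sub (hasDerivAt_id t)).add_const y).sub h2
    refine h1.congr_deriv ?_
    field_simp
    ring
  have h := mono_aux _ _ hxy key (fun t ht => hG t (Set.Ioo_subset_Icc_self ht))
  unfold De
  simp only [sub_self] at h
  norm_num at h
  linarith

lemma log_le_half {r : ℝ} (hr : 4 ≤ r) : log r ≤ (r-1)/2 := by
  have key : ∀ t ∈ Set.Icc 4 r, HasDerivAt (fun t => (t-1)/2 - log t) (1/2 - 1/t) t := by
    intro t ht
    have ht0 : (0:ℝ) < t := lt_of_lt_of_le (by norm_num) ht.1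
    have h1 := (((hasDerivAt_id t).sub_const 1).div_const 2).sub (Real.hasDerivAt_log ht0.ne')
    refine h1.congr_deriv ?_
    norm_num
  have h0 : ∀ t ∈ Set.Ioo 4 r, 0 ≤ 1/2 - 1/t := by
    intro t ht
    have : (0:ℝ) < t := lt_of_lt_of_le (by norm_num) ht.1.le
    rw [sub_nonneg, div_le_div_iff₀ this (by norm_num)]
    linarith [ht.1.le]
  have h := mono_aux _ _ hr key h0
  have h4 : log 4 < 3/2 := by
    have : (4:ℝ) = 2^2 := by norm_num
    rw [this, Real.log_pow]
    have := Real.log_two_lt_d9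
    norm_num
    nlinarith
  norm_num at h
  linarith

lemma Db_ratio {x y : ℝ} (hy : 0 < y) (h4 : 4*y ≤ x) : (x/y - 1)/2 ≤ Db x y := by
  have hx : 0 < x := by nlinarith
  have hr : 4 ≤ x/y := by rw [le_div_iff₀ hy]; linarith
  have h := log_le_half hr
  rw [Real.log_div hx.ne' hy.ne'] at h
  unfold Db; linarith

lemma amgm {c : ℝ} (hc : 0 < c) (a l : ℝ) : a*l ≤ a^2/(4*c) + c*l^2 := by
  rw [← sub_nonneg]
  have h : a^2/(4*c) + c*l^2 - a*l = (a - 2*c*l)^2/(4*c) := by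
    field_simp
    ring
  rw [h]
  positivity


noncomputable def psiF {K : ℕ} (η c : ℝ) (p : Fin K → ℝ) : ℝ :=
  (1 / η) * ∑ i, p i * Real.log (p i) + c * ∑ i, Real.log (1 / p i)

noncomputable def gradL {K : ℕ} (η c : ℝ) (y : Fin K → ℝ) : (Fin K → ℝ) →L[ℝ] ℝ :=
  ∑ i, ((1/η) * (log (y i) + 1) + c * -(y i)⁻¹) • (ContinuousLinearMap.proj i)

lemma gradL_apply {K : ℕ} (η c : ℝ) (y v : Fin K → ℝ) :
    gradL η c y v = ∑ i, ((1/η) * (log (y i) + 1) + c * -(y i)⁻¹) * (v i) := by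
  simp [gradL, ContinuousLinearMap.sum_apply]

lemma psiF_eq_sum {K : ℕ} (η c : ℝ) :
    (psiF (K := K) η c) = fun p => ∑ i, ((1/η) * (p i * Real.log (p i)) + c * (-Real.log (p i))) := by
  funext p
  unfold psiF
  rw [Finset.sum_add_distrib, mul_sum, mul_sum]
  congr 1
  apply Finset.sum_congr rfl
  intro i _
  rw [one_div (p i), Real.log_inv]

lemma hasFDerivAt_psiF {K : ℕ} (η c : ℝ) (y : Fin K → ℝ) (hy : ∀ i, y i ≠ 0) :
    HasFDerivAt (psiF η c) (gradL η c y) y := by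
  rw [psiF_eq_sum]
  unfold gradL
  apply HasFDerivAt.fun_sum
  intro i _
  have hder : HasDerivAt (fun a : ℝ => (1/η) * (a * Real.log a) + c * (-Real.log a))
      ((1/η) * (log (y i) + 1) + c * -(y i)⁻¹) (y i) :=
    ((Real.hasDerivAt_mul_log (hy i)).const_mul (1/η)).add
      (((Real.hasDerivAt_log (hy i)).neg).const_mul c)
  exact hder.comp_hasFDerivAt y
    ((ContinuousLinearMap.proj (R := ℝ) (φ := fun _ : Fin K => ℝ) i).hasFDerivAt)

lemma breg_formula {K : ℕ} (η c : ℝ) (hη : η ≠ 0) (x y : Fin K → ℝ)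
    (hx : ∀ i, 0 < x i) (hy : ∀ i, 0 < y i) :
    breg (psiF η c) x y = ∑ i, ((1/η) * De (x i) (y i) + c * Db (x i) (y i)) := by
  unfold breg
  rw [(hasFDerivAt_psiF η c y (fun i => (hy i).ne')).fderiv, gradL_apply]
  unfold psiF
  simp only [Pi.sub_apply, mul_sum, one_div, Real.log_inv]
  rw [← Finset.sum_add_distrib, ← Finset.sum_add_distrib, ← Finset.sum_sub_distrib, ← Finset.sum_sub_distrib]
  apply Finset.sum_congr rfl
  intro i _
  unfold De Db
  have h1 : y i ≠ 0 := (hy i).ne'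
  field_simp
  ring

lemma three_point {K : ℕ} (ψ : (Fin K → ℝ) → ℝ) (u q p : Fin K → ℝ) :
    breg ψ u p - breg ψ u q - breg ψ q p
      = (fderiv ℝ ψ q) (u - q) - (fderiv ℝ ψ p) (u - q) := by
  unfold breg
  have h1 : (fderiv ℝ ψ p) (u - p) = (fderiv ℝ ψ p) u - (fderiv ℝ ψ p) p := map_sub _ _ _
  have h2 : (fderiv ℝ ψ p) (q - p) = (fderiv ℝ ψ p) q - (fderiv ℝ ψ p) p := map_sub _ _ _
  have h3 : (fderiv ℝ ψ p) (u - q) = (fderiv ℝ ψ p) u - (fderiv ℝ ψ p) q := map_sub _ _ _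
  linarith

lemma first_order {K : ℕ} (ψ : (Fin K → ℝ) → ℝ) (Ω : Set (Fin K → ℝ))
    (hconv : ∀ a ∈ Ω, ∀ b ∈ Ω, ∀ s : ℝ, s ∈ Set.Icc (0:ℝ) 1 → a + s • (b - a) ∈ Ω)
    (ℓ pp p' : Fin K → ℝ) (hp' : p' ∈ Ω)
    (hdiff : DifferentiableAt ℝ ψ p')
    (hmin : ∀ q ∈ Ω, (∑ i, p' i * ℓ i) + breg ψ p' pp ≤ (∑ i, q i * ℓ i) + breg ψ q pp)
    (u : Fin K → ℝ) (hu : u ∈ Ω) :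
    0 ≤ (∑ i, (u i - p' i) * ℓ i)
        + ((fderiv ℝ ψ p') (u - p') - (fderiv ℝ ψ pp) (u - p')) := by
  set v := u - p' with hv
  set F := fderiv ℝ ψ pp with hF
  set F' := fderiv ℝ ψ p' with hF'
  set γ : ℝ → (Fin K → ℝ) := fun s => p' + s • v with hγdef
  have hγ0 : γ 0 = p' := by simp [hγdef]
  set g : ℝ → ℝ := fun s => (∑ i, γ s i * ℓ i) + breg ψ (γ s) pp with hg
  set d : ℝ := (∑ i, v i * ℓ i) + (F' v - F v) with hd
  -- derivative of g at 0
  have hγder : HasDerivAt γ v 0 := by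
    simpa [hγdef] using ((hasDerivAt_id (0:ℝ)).smul_const v).const_add p'
  have hA : HasDerivAt (fun s => ∑ i, γ s i * ℓ i) (∑ i, v i * ℓ i) 0 := by
    have hrw : (fun s => ∑ i, γ s i * ℓ i)
        = fun s => (∑ i, p' i * ℓ i) + s * (∑ i, v i * ℓ i) := by
      funext s
      rw [mul_sum, ← Finset.sum_add_distrib]
      apply Finset.sum_congr rfl
      intro i _
      simp [hγdef]
      ring
    rw [hrw]
    simpa using (hasDerivAt_mul_const (∑ i, v i * ℓ i)).const_add (∑ i, p' i * ℓ i)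
  have hψγ : HasDerivAt (fun s => ψ (γ s)) (F' v) 0 := by
    have hfd : HasFDerivAt ψ F' (γ 0) := by rw [hγ0]; exact hdiff.hasFDerivAt
    exact hfd.comp_hasDerivAt 0 hγder
  have hB : HasDerivAt (fun s => F (γ s - pp)) (F v) 0 := by
    have hrw : (fun s => F (γ s - pp)) = fun s => F (p' - pp) + s * F v := by
      funext s
      have : γ s - pp = (p' - pp) + s • v := by
        simp [hγdef]; abel
      rw [this, map_add, map_smul]
      simp
    rw [hrw]
    simpa using (hasDerivAt_mul_const (F v)).const_add (F (p' - pp))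
  have hgder : HasDerivAt g d 0 := by
    have h1 := hA.add ((hψγ.sub_const (ψ pp)).sub hB)
    have : g = fun s => (∑ i, γ s i * ℓ i) + (ψ (γ s) - ψ pp - F (γ s - pp)) := by
      funext s; simp [hg, breg, hF]
    rw [this, hd]
    exact h1
  -- slopes are nonnegative
  have hslope : ∀ᶠ s in nhdsWithin (0:ℝ) (Set.Ioi 0), 0 ≤ slope g 0 s := by
    filter_upwards [Ioc_mem_nhdsGT_of_mem (Set.mem_Ico.2 ⟨le_refl (0:ℝ), zero_lt_one⟩)]
    intro s hs
    have hmem : γ s ∈ Ω := hconv p' hp' u hu s ⟨hs.1.le, hs.2⟩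
    have hle : g 0 ≤ g s := by
      have := hmin (γ s) hmem
      simpa [hg, hγ0] using this
    rw [slope_def_field]
    have h0 : (0:ℝ) < s := hs.1
    apply div_nonneg (by linarith) (by simpa using h0.le)
  have htend : Filter.Tendsto (slope g 0) (nhdsWithin (0:ℝ) (Set.Ioi 0)) (nhds d) :=
    (hasDerivAt_iff_tendsto_slope.mp hgder).mono_left
      (nhdsWithin_mono 0 (fun x hx => ne_of_gt hx))
  have h0d : 0 ≤ d := ge_of_tendsto htend hslope
  simpa [hd, hv] using h0d

set_option maxHeartbeats 2000000 in
lemma core_ineq {K T : ℕ} (hK : 2 ≤ K) (hT0 : 0 < (T:ℝ))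
    (S : Finset (Fin K)) (η : ℝ) (hη : 0 < η)
    (p p' ℓ : Fin K → ℝ)
    (hps : ∑ i, p i = 1) (hpT : ∀ i, 1/(T:ℝ) ≤ p i)
    (hps' : ∑ i, p' i = 1) (hpT' : ∀ i, 1/(T:ℝ) ≤ p' i)
    (hl0 : ∀ i, 0 ≤ ℓ i)
    (hlSc : ∀ i ∉ S, ℓ i ≤ 1 / (1 - p i)) :
    ∑ i, (p i - p' i) * ℓ i ≤
      (∑ i, ((1/η) * De (p' i) (p i) + (64*(K:ℝ)) * Db (p' i) (p i)))
      + (8*η*(∑ i ∈ S, p i * ℓ i^2) + 16*η*(∑ i ∈ Sᶜ, p i * ℓ i)) := by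
  have h1T : 0 < 1/(T:ℝ) := by positivity
  have hp0 : ∀ i, 0 < p i := fun i => lt_of_lt_of_le h1T (hpT i)
  have hp0' : ∀ i, 0 < p' i := fun i => lt_of_lt_of_le h1T (hpT' i)
  have hK0 : (1:ℝ) ≤ (K:ℝ) := by exact_mod_cast le_trans (by norm_num) hK
  -- notation
  set R : Fin K → ℝ := fun i => if i ∈ S then 8*η*(p i * ℓ i^2) else 16*η*(p i * ℓ i) with hR
  have hR0 : ∀ i, 0 ≤ R i := by
    intro i
    rw [hR]
    dsimp only
    split <;> · have := hp0 i; have := hl0 i; positivity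
  have hRsum : ∑ i, R i = 8*η*(∑ i ∈ S, p i * ℓ i^2) + 16*η*(∑ i ∈ Sᶜ, p i * ℓ i) := by
    rw [← Finset.sum_add_sum_compl S R, Finset.mul_sum, Finset.mul_sum]
    congr 1
    · apply Finset.sum_congr rfl; intro i hi; rw [hR]; simp [hi]
    · apply Finset.sum_congr rfl; intro i hi; rw [Finset.mem_compl] at hi; rw [hR]; simp [hi]
  have hDe0 : ∀ i, 0 ≤ De (p' i) (p i) := fun i => De_nonneg (hp0' i) (hp0 i)
  have hDb0 : ∀ i, 0 ≤ Db (p' i) (p i) := fun i => Db_nonneg (hp0' i) (hp0 i)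
  -- per-coordinate bound for "small" coordinates
  have hcoord : ∀ i, (p' i < p i → (i ∈ S ∨ p i ≤ 1/2)) →
      (p i - p' i) * ℓ i ≤ (1/(2*η)) * De (p' i) (p i) + R i := by
    intro i hcase
    rcases le_or_gt (p i) (p' i) with hle | hlt
    · have h1 : (p i - p' i) * ℓ i ≤ 0 :=
        mul_nonpos_of_nonpos_of_nonneg (by linarith) (hl0 i)
      have h2 : 0 ≤ (1/(2*η)) * De (p' i) (p i) := by
        have := hDe0 i; positivity
      linarith [hR0 i]
    · have ha : 0 < p i - p' i := by linarith
      have hDe := De_decrease (hp0' i) hlt.le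
      have hAM := amgm (show 0 < η * p i from mul_pos hη (hp0 i)) (p i - p' i) (ℓ i)
      have hDe2 : (p i - p' i)^2/(4*(η * p i)) ≤ (1/(2*η)) * De (p' i) (p i) := by
        have h3 : (p i - p' i)^2/(4*(η * p i)) = (1/(2*η)) * ((p i - p' i)^2/(2 * p i)) := by
          field_simp; ring
        rw [h3]
        apply mul_le_mul_of_nonneg_left hDe (by positivity)
      rcases hcase hlt with hiS | hip
      · have hRi : R i = 8*η*(p i * ℓ i^2) := by rw [hR]; simp [hiS]
        rw [hRi]
        have h4 : η * p i * ℓ i ^2 ≤ 8*η*(p i * ℓ i^2) := by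
          nlinarith [mul_nonneg (mul_nonneg hη.le (hp0 i).le) (sq_nonneg (ℓ i))]
        linarith
      · by_cases hiS : i ∈ S
        · have hRi : R i = 8*η*(p i * ℓ i^2) := by rw [hR]; simp [hiS]
          rw [hRi]
          have h4 : η * p i * ℓ i ^2 ≤ 8*η*(p i * ℓ i^2) := by
            nlinarith [mul_nonneg (mul_nonneg hη.le (hp0 i).le) (sq_nonneg (ℓ i))]
          linarith
        · have hRi : R i = 16*η*(p i * ℓ i) := by rw [hR]; simp [hiS]
          rw [hRi]
          have hl2 : ℓ i ≤ 2 := by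
            have h5 := hlSc i hiS
            have h6 : (1:ℝ)/(1 - p i) ≤ 2 := by
              rw [div_le_iff₀ (by linarith)]
              linarith
            linarith
          have h4 : η * p i * ℓ i ^2 ≤ 16*η*(p i * ℓ i) := by
            nlinarith [mul_le_mul_of_nonneg_left hl2
                (mul_nonneg (mul_nonneg hη.le (hp0 i).le) (hl0 i)),
              mul_nonneg (mul_nonneg hη.le (hp0 i).le) (hl0 i)]
          linarith
  by_cases hbig : ∃ i0, i0 ∉ S ∧ 1/2 < p i0 ∧ p' i0 < p i0
  case neg =>
    push_neg at hbig
    have hall : ∀ i, (p i - p' i) * ℓ i ≤ (1/(2*η)) * De (p' i) (p i) + R i := by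
      intro i
      apply hcoord
      intro hlt
      by_cases hiS : i ∈ S
      · exact Or.inl hiS
      · exact Or.inr (le_of_not_gt (fun hgt => absurd hlt (not_lt.2 (le_of_lt (lt_of_le_of_lt (le_of_eq rfl) (lt_of_not_ge (fun _ => (hbig i hiS hgt).not_gt hlt)))))))
    have hsum := Finset.sum_le_sum (fun i (_ : i ∈ Finset.univ) => hall i)
    rw [← hRsum]
    rw [Finset.sum_add_distrib] at hsum
    have h7 : ∑ i, (1/(2*η)) * De (p' i) (p i) ≤
        ∑ i, ((1/η) * De (p' i) (p i) + (64*(K:ℝ)) * Db (p' i) (p i)) := by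
      apply Finset.sum_le_sum
      intro i _
      have h8 : (1/(2*η)) * De (p' i) (p i) ≤ (1/η) * De (p' i) (p i) := by
        apply mul_le_mul_of_nonneg_right _ (hDe0 i)
        rw [div_le_div_iff₀ (by positivity) hη]
        linarith
      have h9 : 0 ≤ (64*(K:ℝ)) * Db (p' i) (p i) := by
        have := hDb0 i; positivity
      linarith
    linarith
  case pos =>
    obtain ⟨i0, hi0S, hi0half, hi0lt⟩ := hbig
    set a := p i0 - p' i0 with haDef
    have ha : 0 < a := by rw [haDef]; linarith
    set q : ℝ := 1 - p i0 with hqDef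
    have hqsum : ∑ j ∈ Finset.univ.erase i0, p j = q := by
      have := Finset.add_sum_erase Finset.univ p (Finset.mem_univ i0)
      rw [hps] at this
      linarith
    have hqsum' : ∑ j ∈ Finset.univ.erase i0, p' j = q + a := by
      have := Finset.add_sum_erase Finset.univ p' (Finset.mem_univ i0)
      rw [hps'] at this
      rw [hqDef, haDef]
      linarith
    have hne : (Finset.univ.erase i0).Nonempty := by
      have hcard : (Finset.univ.erase i0).card = K - 1 := by
        rw [Finset.card_erase_of_mem (Finset.mem_univ i0), Finset.card_univ, Fintype.card_fin]
      rw [← Finset.card_pos, hcard]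
      omega
    have hq0 : 0 < q := by
      rw [← hqsum]
      exact Finset.sum_pos (fun j _ => hp0 j) hne
    have hl0q : ℓ i0 ≤ 1/q := by
      have := hlSc i0 hi0S
      rw [hqDef]
      exact this
    have hsmall : ∀ j, j ≠ i0 → p j ≤ 1/2 := by
      intro j hj
      have hsub : ({j, i0} : Finset (Fin K)) ⊆ Finset.univ := Finset.subset_univ _
      have hpair : ∑ x ∈ ({j, i0} : Finset (Fin K)), p x = p j + p i0 :=
        Finset.sum_pair hj
      have hle : ∑ x ∈ ({j, i0} : Finset (Fin K)), p x ≤ 1 := by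
        rw [← hps]
        exact Finset.sum_le_sum_of_subset_of_nonneg hsub (fun i _ _ => (hp0 i).le)
      rw [hpair] at hle
      linarith
    -- the key claim for i0
    have hkey : a * ℓ i0 ≤ 16*η*(p i0 * ℓ i0)
        + (1/(2*η)) * (∑ j ∈ Finset.univ.erase i0, De (p' j) (p j))
        + (64*(K:ℝ)) * (∑ j, Db (p' j) (p j)) := by
      have hDbSum0 : 0 ≤ ∑ j, Db (p' j) (p j) := Finset.sum_nonneg (fun j _ => hDb0 j)
      have hDeSum0 : 0 ≤ ∑ j ∈ Finset.univ.erase i0, De (p' j) (p j) :=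
        Finset.sum_nonneg (fun j _ => hDe0 j)
      rcases le_or_gt a (3*q) with hsub3 | hsub3
      · -- a ≤ 3q : use aggregated entropy
        set Bset := (Finset.univ.erase i0).filter (fun j => p j ≤ p' j) with hBdef
        have hδ : a ≤ ∑ j ∈ Bset, (p' j - p j) := by
          have hsplit := Finset.sum_filter_add_sum_filter_not (Finset.univ.erase i0)
            (fun j => p j ≤ p' j) (fun j => p' j - p j)
          have htot : ∑ j ∈ Finset.univ.erase i0, (p' j - p j) = a := by
            rw [Finset.sum_sub_distrib, hqsum, hqsum']
            ring
          have hneg : ∑ j ∈ (Finset.univ.erase i0).filter (fun j => ¬ p j ≤ p' j),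
              (p' j - p j) ≤ 0 := by
            apply Finset.sum_nonpos
            intro j hj
            rw [Finset.mem_filter] at hj
            push_neg at hj
            linarith [hj.2]
          rw [hBdef]
          linarith [hsplit, htot, hneg]
        have hCS : a^2 ≤ (q + a) * ∑ j ∈ Bset, (p' j - p j)^2 / p' j := by
          have hcs := Finset.sum_mul_sq_le_sq_mul_sq Bset
            (fun j => Real.sqrt (p' j)) (fun j => (p' j - p j)/Real.sqrt (p' j))
          have he1 : ∀ j ∈ Bset, Real.sqrt (p' j) * ((p' j - p j)/Real.sqrt (p' j))
              = p' j - p j := by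
            intro j _
            rw [mul_div_cancel₀]
            exact Real.sqrt_ne_zero'.mpr (hp0' j)
          have he2 : ∀ j ∈ Bset, (Real.sqrt (p' j))^2 = p' j := by
            intro j _
            exact Real.sq_sqrt (hp0' j).le
          have he3 : ∀ j ∈ Bset, ((p' j - p j)/Real.sqrt (p' j))^2
              = (p' j - p j)^2 / p' j := by
            intro j hj
            rw [div_pow, Real.sq_sqrt (hp0' j).le]
          rw [Finset.sum_congr rfl he1, Finset.sum_congr rfl he2,
            Finset.sum_congr rfl he3] at hcs
          have hBsub : ∑ j ∈ Bset, p' j ≤ q + a := by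
            rw [← hqsum']
            apply Finset.sum_le_sum_of_subset_of_nonneg (Finset.filter_subset _ _)
            exact fun i _ _ => (hp0' i).le
          have hsq : a^2 ≤ (∑ j ∈ Bset, (p' j - p j))^2 := by
            apply pow_le_pow_left₀ ha.le hδ
          have hnn : 0 ≤ ∑ j ∈ Bset, (p' j - p j)^2 / p' j := by
            apply Finset.sum_nonneg
            intro j _
            have := hp0' j
            positivity
          calc a^2 ≤ (∑ j ∈ Bset, (p' j - p j))^2 := hsq
            _ ≤ (∑ j ∈ Bset, p' j) * (∑ j ∈ Bset, (p' j - p j)^2 / p' j) := hcs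
            _ ≤ (q + a) * (∑ j ∈ Bset, (p' j - p j)^2 / p' j) := by
                apply mul_le_mul_of_nonneg_right hBsub hnn
        have hE : a^2/(8*q) ≤ ∑ j ∈ Finset.univ.erase i0, De (p' j) (p j) := by
          have hBe : ∑ j ∈ Bset, (p' j - p j)^2/(2*p' j) ≤
              ∑ j ∈ Finset.univ.erase i0, De (p' j) (p j) := by
            apply le_trans (Finset.sum_le_sum (fun j hj => ?_))
              (Finset.sum_le_sum_of_subset_of_nonneg (Finset.filter_subset _ _)
                (fun j _ _ => hDe0 j))
            rw [Finset.mem_filter] at hj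
            exact De_increase (hp0 j) hj.2
          have h10 : a^2/(8*q) ≤ ∑ j ∈ Bset, (p' j - p j)^2/(2*p' j) := by
            have hsum2 : ∑ j ∈ Bset, (p' j - p j)^2/(2*p' j)
                = (1/2) * ∑ j ∈ Bset, (p' j - p j)^2/p' j := by
              rw [Finset.mul_sum]
              apply Finset.sum_congr rfl
              intro j _
              field_simp
            rw [hsum2]
            have hqa : 0 < q + a := by linarith
            have h11 : a^2/(q+a) ≤ ∑ j ∈ Bset, (p' j - p j)^2/p' j := by
              rw [div_le_iff₀ hqa]
              linarith [hCS]
            have h12 : a^2/(8*q) ≤ (1/2) * (a^2/(q+a)) := by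
              rw [div_le_iff₀ (by positivity)]
              have : (1/2) * (a^2/(q+a)) * (8*q) = a^2 * (4*q/(q+a)) := by
                field_simp; ring
              rw [this]
              have h13 : (1:ℝ) ≤ 4*q/(q+a) := by
                rw [le_div_iff₀ hqa]
                linarith
              nlinarith [sq_nonneg a]
            linarith [mul_le_mul_of_nonneg_left h11 (by norm_num : (0:ℝ) ≤ 1/2)]
          linarith
        -- AM-GM
        have hAM := amgm (show 0 < 4*η*q by positivity) a (ℓ i0)
        have h14 : a^2/(4*(4*η*q)) = (1/(2*η)) * (a^2/(8*q)) := by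
          field_simp; ring
        have h15 : (4*η*q) * ℓ i0^2 ≤ 16*η*(p i0 * ℓ i0) := by
          have hql : q * ℓ i0 ≤ 1 := by
            have := mul_le_mul_of_nonneg_left hl0q hq0.le
            rw [mul_one_div, div_self hq0.ne'] at this
            exact this
          have hl00 := hl0 i0
          nlinarith [mul_le_mul_of_nonneg_left hql
              (mul_nonneg (mul_nonneg (by norm_num : (0:ℝ) ≤ 4) hη.le) hl00),
            mul_nonneg (mul_nonneg hη.le hl00) (by linarith : (0:ℝ) ≤ 4*p i0 - 1)]
        have h16 : (1/(2*η)) * (a^2/(8*q)) ≤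
            (1/(2*η)) * (∑ j ∈ Finset.univ.erase i0, De (p' j) (p j)) := by
          apply mul_le_mul_of_nonneg_left hE (by positivity)
        have h17 : 0 ≤ (64*(K:ℝ)) * (∑ j, Db (p' j) (p j)) := by positivity
        calc a * ℓ i0 ≤ a^2/(4*(4*η*q)) + (4*η*q) * ℓ i0^2 := hAM
          _ = (1/(2*η)) * (a^2/(8*q)) + (4*η*q) * ℓ i0^2 := by rw [h14]
          _ ≤ (1/(2*η)) * (∑ j ∈ Finset.univ.erase i0, De (p' j) (p j))
              + 16*η*(p i0 * ℓ i0) := add_le_add h16 h15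
          _ ≤ _ := by linarith
      · -- a > 3q : use the log barrier
        have hj : ∃ j ∈ Finset.univ.erase i0, (q + a) * p j ≤ q * p' j := by
          by_contra hcon
          push_neg at hcon
          have hlt2 := Finset.sum_lt_sum_of_nonempty hne
            (fun j hj => hcon j hj)
          rw [← Finset.mul_sum, ← Finset.mul_sum, hqsum, hqsum'] at hlt2
          nlinarith
        obtain ⟨js, hjs, hjineq⟩ := hj
        have hpj0 : 0 < p js := hp0 js
        have hratio : (q + a)/q ≤ p' js / p js := by
          rw [div_le_div_iff₀ hq0 hpj0]
          nlinarith
        have h4y : 4 * p js ≤ p' js := by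
          have h18 : 4 * q ≤ q + a := by linarith
          nlinarith [hp0' js]
        have hDbr := Db_ratio hpj0 h4y
        have h19 : a/(2*q) ≤ (p' js / p js - 1)/2 := by
          have h20 : 1 + a/q ≤ p' js/p js := by
            have : (q+a)/q = 1 + a/q := by field_simp
            linarith [hratio, this.symm.le, this.le]
          have h21 : a/q ≤ p' js/p js - 1 := by linarith
          have heq : a/(2*q) = (a/q)/2 := by
            rw [div_div]; ring_nf
          rw [heq]; linarith
        have hDbj : a/(2*q) ≤ Db (p' js) (p js) := le_trans h19 hDbr
        have hsumDb : Db (p' js) (p js) ≤ ∑ j, Db (p' j) (p j) :=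
          Finset.single_le_sum (fun j _ => hDb0 j) (Finset.mem_univ js)
        have h22 : a * ℓ i0 ≤ a/q := by
          have := mul_le_mul_of_nonneg_left hl0q ha.le
          rw [mul_one_div] at this
          exact this
        have haq : 0 ≤ a/q := by positivity
        have heq2 : 64*(K:ℝ)*(a/(2*q)) = 32*(K:ℝ)*(a/q) := by
          field_simp; ring
        have h23 : a/q ≤ 64*(K:ℝ) * (a/(2*q)) := by
          rw [heq2]
          nlinarith
        have h24 : 64*(K:ℝ) * (a/(2*q)) ≤ 64*(K:ℝ) * (∑ j, Db (p' j) (p j)) := by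
          apply mul_le_mul_of_nonneg_left (le_trans hDbj hsumDb) (by positivity)
        have h25 : 0 ≤ 16*η*(p i0 * ℓ i0) := by
          have := hl0 i0; have := hp0 i0; positivity
        have h26 : 0 ≤ (1/(2*η)) * (∑ j ∈ Finset.univ.erase i0, De (p' j) (p j)) := by
          positivity
        linarith
    -- assemble
    have herase : ∀ j ∈ Finset.univ.erase i0,
        (p j - p' j)*ℓ j ≤ (1/(2*η)) * De (p' j) (p j) + R j := by
      intro j hj
      exact hcoord j (fun _ => Or.inr (hsmall j (Finset.ne_of_mem_erase hj)))
    have hsum3 := Finset.sum_le_sum herase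
    rw [Finset.sum_add_distrib] at hsum3
    have hfhalf : ∑ j ∈ Finset.univ.erase i0, (1/(2*η)) * De (p' j) (p j)
        = (1/(2*η)) * ∑ j ∈ Finset.univ.erase i0, De (p' j) (p j) :=
      (Finset.mul_sum _ _ _).symm
    rw [hfhalf] at hsum3
    have hDesplit : ∑ i, De (p' i) (p i)
        = De (p' i0) (p i0) + ∑ j ∈ Finset.univ.erase i0, De (p' j) (p j) :=
      (Finset.add_sum_erase _ (fun i => De (p' i) (p i)) (Finset.mem_univ i0)).symm
    have hRsplit : ∑ i, R i = R i0 + ∑ j ∈ Finset.univ.erase i0, R j :=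
      (Finset.add_sum_erase _ R (Finset.mem_univ i0)).symm
    have hsplitL : ∑ i, (p i - p' i) * ℓ i
        = a * ℓ i0 + ∑ j ∈ Finset.univ.erase i0, (p j - p' j) * ℓ j := by
      rw [haDef]
      exact (Finset.add_sum_erase _ (fun i => (p i - p' i) * ℓ i) (Finset.mem_univ i0)).symm
    have hRi0 : R i0 = 16*η*(p i0 * ℓ i0) := by rw [hR]; simp [hi0S]
    have htarget : ∑ i, ((1/η) * De (p' i) (p i) + (64*(K:ℝ)) * Db (p' i) (p i))
        = (1/η) * ∑ i, De (p' i) (p i) + (64*(K:ℝ)) * ∑ i, Db (p' i) (p i) := by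
      rw [Finset.sum_add_distrib, Finset.mul_sum, Finset.mul_sum]
    have hhalf : ∀ X : ℝ, (1/(2*η)) * X + (1/(2*η)) * X = (1/η) * X := by
      intro X; field_simp; ring
    have hDtot2 : (1/η) * ∑ i, De (p' i) (p i)
        = (1/η) * De (p' i0) (p i0)
          + (1/η) * (∑ j ∈ Finset.univ.erase i0, De (p' j) (p j)) := by
      rw [hDesplit]; ring
    have hDei0nn : 0 ≤ (1/η) * De (p' i0) (p i0) :=
      mul_nonneg (by positivity) (hDe0 i0)
    rw [← hRsum, htarget, hsplitL, hRsplit, hRi0]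
    linarith [hkey, hsum3, hDtot2, hDei0nn,
      hhalf (∑ j ∈ Finset.univ.erase i0, De (p' j) (p j))]

lemma telescope_icc (f : ℕ → ℝ) (n : ℕ) :
    ∑ t ∈ Finset.Icc 1 n, (f t - f (t+1)) = f 1 - f (n+1) := by
  induction n with
  | zero => simp
  | succ m ih =>
    rw [Finset.sum_Icc_succ_top (by omega), ih]
    ring

set_option maxHeartbeats 2000000 in
/-- Pathwise regret bound underlying Theorem 2 of the paper: OMD over a clipped
simplex with the hybrid Shannon-entropy-plus-log-barrier regularizer. -/
theorem stmt5 (K T : ℕ) (hK : 2 ≤ K) (hT : 2 * K ≤ T)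
    (S : Finset (Fin K)) (η : ℝ) (hη : 0 < η)
    (Ω : Set (Fin K → ℝ))
    (hΩ : Ω = {p | p ∈ stdSimplex ℝ (Fin K) ∧ ∀ i, 1 / (T : ℝ) ≤ p i})
    (ψ : (Fin K → ℝ) → ℝ)
    (hψ : ψ = fun p => (1 / η) * ∑ i, p i * Real.log (p i)
      + (64 * (K : ℝ)) * ∑ i, Real.log (1 / p i))
    (p ℓ : ℕ → Fin K → ℝ)
    (hp1 : p 1 ∈ Ω)
    (hℓ0 : ∀ t ∈ Finset.Icc 1 T, ∀ i, 0 ≤ ℓ t i)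
    (hℓS : ∀ t ∈ Finset.Icc 1 T, ∀ i ∈ S, ℓ t i ≤ 1 / p t i)
    (hℓSc : ∀ t ∈ Finset.Icc 1 T, ∀ i ∉ S, ℓ t i ≤ 1 / (1 - p t i))
    (hupd : ∀ t ∈ Finset.Icc 1 T, p (t + 1) ∈ Ω ∧ ∀ q ∈ Ω,
      (∑ i, p (t + 1) i * ℓ t i) + breg ψ (p (t + 1)) (p t)
        ≤ (∑ i, q i * ℓ t i) + breg ψ q (p t)) :
    ∀ u ∈ Ω,
      ∑ t ∈ Finset.Icc 1 T, ∑ i, (p t i - u i) * ℓ t i ≤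
        breg ψ u (p 1)
          + 8 * η * ∑ t ∈ Finset.Icc 1 T, ∑ i ∈ S, p t i * ℓ t i ^ 2
          + 16 * η * ∑ t ∈ Finset.Icc 1 T, ∑ i ∈ Sᶜ, p t i * ℓ t i := by
  intro u hu
  have hT4 : 4 ≤ T := by omega
  have hT0 : 0 < (T:ℝ) := by
    have : 0 < T := by omega
    exact_mod_cast this
  have hψF : ψ = psiF η (64*(K:ℝ)) := by
    funext r
    rw [hψ]
    rfl
  -- membership facts
  have hmem : ∀ r ∈ Ω, (∀ i, 0 ≤ r i) ∧ (∑ i, r i = 1) ∧ (∀ i, 1/(T:ℝ) ≤ r i) := by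
    intro r hr
    rw [hΩ] at hr
    exact ⟨hr.1.1, hr.1.2, hr.2⟩
  have hpos : ∀ r ∈ Ω, ∀ i, 0 < r i := by
    intro r hr i
    have h1 : 0 < 1/(T:ℝ) := by positivity
    exact lt_of_lt_of_le h1 ((hmem r hr).2.2 i)
  -- convexity of Ω
  have hconv : ∀ a ∈ Ω, ∀ b ∈ Ω, ∀ s : ℝ, s ∈ Set.Icc (0:ℝ) 1 → a + s • (b - a) ∈ Ω := by
    intro a ha b hb s hs
    obtain ⟨ha0, haS, haT⟩ := hmem a ha
    obtain ⟨hb0, hbS, hbT⟩ := hmem b hb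
    rw [hΩ]
    have happ : ∀ i, (a + s • (b - a)) i = a i + s * (b i - a i) := by
      intro i; simp
    refine ⟨⟨fun i => ?_, ?_⟩, fun i => ?_⟩
    · rw [happ i]
      nlinarith [ha0 i, hb0 i, hs.1, hs.2]
    · have : ∑ i, (a + s • (b - a)) i = ∑ i, (a i + s * (b i - a i)) :=
        Finset.sum_congr rfl (fun i _ => happ i)
      rw [this, Finset.sum_add_distrib, ← Finset.mul_sum, Finset.sum_sub_distrib,
        haS, hbS]
      ring
    · rw [happ i]
      nlinarith [haT i, hbT i, hs.1, hs.2]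
  -- iterates stay in Ω
  have hmemt : ∀ t, 1 ≤ t → t ≤ T + 1 → p t ∈ Ω := by
    intro t
    induction t with
    | zero => intro h; omega
    | succ m ih =>
      intro _ h2
      by_cases hm : m = 0
      · subst hm; exact hp1
      · have hm1 : 1 ≤ m := Nat.one_le_iff_ne_zero.2 hm
        have hmT : m ≤ T := by omega
        exact (hupd m (Finset.mem_Icc.2 ⟨hm1, hmT⟩)).1
  have hdiff : ∀ r ∈ Ω, DifferentiableAt ℝ ψ r := by
    intro r hr
    rw [hψF]
    exact (hasFDerivAt_psiF η (64*(K:ℝ)) r (fun i => (hpos r hr i).ne')).differentiableAt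
  have hbregf : ∀ x y : Fin K → ℝ, (∀ i, 0 < x i) → (∀ i, 0 < y i) →
      breg ψ x y = ∑ i, ((1/η) * De (x i) (y i) + (64*(K:ℝ)) * Db (x i) (y i)) := by
    intro x y hx hy
    rw [hψF]
    exact breg_formula η (64*(K:ℝ)) hη.ne' x y hx hy
  -- per-step bound
  have hstep : ∀ t ∈ Finset.Icc 1 T,
      ∑ i, (p t i - u i) * ℓ t i ≤
        (breg ψ u (p t) - breg ψ u (p (t+1)))
        + (8*η*(∑ i ∈ S, p t i * ℓ t i^2) + 16*η*(∑ i ∈ Sᶜ, p t i * ℓ t i)) := by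
    intro t ht
    have htIcc := Finset.mem_Icc.1 ht
    have hPmem : p t ∈ Ω := hmemt t htIcc.1 (by omega)
    have hP'mem : p (t+1) ∈ Ω := (hupd t ht).1
    obtain ⟨_, hPs, hPT⟩ := hmem _ hPmem
    obtain ⟨_, hP's, hP'T⟩ := hmem _ hP'mem
    have hopt := first_order ψ Ω hconv (ℓ t) (p t) (p (t+1)) hP'mem
      (hdiff _ hP'mem) (hupd t ht).2 u hu
    have h3pt := three_point ψ u (p (t+1)) (p t)
    have hcore := core_ineq hK hT0 S η hη (p t) (p (t+1)) (ℓ t)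
      hPs hPT hP's hP'T (hℓ0 t ht) (hℓSc t ht)
    have hbP := hbregf (p (t+1)) (p t) (fun i => hpos _ hP'mem i) (fun i => hpos _ hPmem i)
    have hsplit : ∑ i, (p t i - u i) * ℓ t i
        = ∑ i, (p t i - p (t+1) i) * ℓ t i + ∑ i, (p (t+1) i - u i) * ℓ t i := by
      rw [← Finset.sum_add_distrib]
      apply Finset.sum_congr rfl
      intro i _
      ring
    have hflip : ∑ i, (p (t+1) i - u i) * ℓ t i
        = - ∑ i, (u i - p (t+1) i) * ℓ t i := by
      rw [← Finset.sum_neg_distrib]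
      apply Finset.sum_congr rfl
      intro i _
      ring
    rw [hsplit, hflip]
    rw [← hbP] at hcore
    linarith [hopt, h3pt, hcore]
  -- sum up
  have hsumstep := Finset.sum_le_sum hstep
  rw [Finset.sum_add_distrib] at hsumstep
  -- telescoping
  have htel : ∑ t ∈ Finset.Icc 1 T, (breg ψ u (p t) - breg ψ u (p (t+1)))
      = breg ψ u (p 1) - breg ψ u (p (T+1)) := by
    exact telescope_icc (fun t => breg ψ u (p t)) T
  have hlast : 0 ≤ breg ψ u (p (T+1)) := by
    have hmemlast : p (T+1) ∈ Ω := hmemt (T+1) (by omega) (by omega)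
    rw [hbregf u (p (T+1)) (fun i => hpos _ hu i) (fun i => hpos _ hmemlast i)]
    apply Finset.sum_nonneg
    intro i _
    have h1 := De_nonneg (hpos _ hu i) (hpos _ hmemlast i)
    have h2 := Db_nonneg (hpos _ hu i) (hpos _ hmemlast i)
    have hK0 : (0:ℝ) ≤ (K:ℝ) := by positivity
    have := mul_nonneg (by positivity : (0:ℝ) ≤ 1/η) h1
    nlinarith
  have hdistrib : ∑ t ∈ Finset.Icc 1 T,
      (8*η*(∑ i ∈ S, p t i * ℓ t i^2) + 16*η*(∑ i ∈ Sᶜ, p t i * ℓ t i))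
      = 8 * η * ∑ t ∈ Finset.Icc 1 T, ∑ i ∈ S, p t i * ℓ t i ^ 2
        + 16 * η * ∑ t ∈ Finset.Icc 1 T, ∑ i ∈ Sᶜ, p t i * ℓ t i := by
    rw [Finset.sum_add_distrib, ← Finset.mul_sum, ← Finset.mul_sum]
  rw [htel, hdistrib] at hsumstep
  linarith
end

section
/- Fix integers K ≥ 2 and T ≥ 2K, a subset S ⊆ [K], a real η with 0 < η ≤ 1/(64K), and set c = 64K. Let Ω = {p ∈ Δ(K) : p_i ≥ 1/T for all i} and ψ(p) = (1/η)·Σ_{i∈S} ln(1/p_i) + (1/η)·Σ_{i∉S} p_i ln p_i + c·Σ_{i∉S} ln(1/p_i). Let p_1 ∈ Ω, and for each t = 1,…,T let ℓ̂_t ∈ ℝ^K satisfy 0 ≤ ℓ̂_{t,i} ≤ 1/p_{t,i} for i ∈ S and 0 ≤ ℓ̂_{t,i} ≤ 1/(1 − p_{t,i}) for i ∉ S, and let p_{t+1} be a minimizer over Ω of p ↦ ⟨p, ℓ̂_t⟩ + D_ψ(p, p_t). Then for every u ∈ Ω: Σ_{t=1}^T ⟨p_t − u, ℓ̂_t⟩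 ≤ D_ψ(u, p_1) + 16η·Σ_{t=1}^T ⟨p_t, ℓ̂_t⟩. -/
open Finset Filter

noncomputable def hfun (r : ℝ) : ℝ := r - 1 - Real.log r
noncomputable def gfun (r : ℝ) : ℝ := r * Real.log r - r + 1

lemma hfun_nonneg {r : ℝ} (hr : 0 < r) : 0 ≤ hfun r := by
  have := Real.log_le_sub_one_of_pos hr
  simp only [hfun]; linarith

lemma gfun_eq (r : ℝ) (hr : 0 < r) : gfun r = r * hfun r⁻¹ := by
  simp only [gfun, hfun, Real.log_inv]
  field_simp; ring

lemma gfun_nonneg {r : ℝ} (hr : 0 < r) : 0 ≤ gfun r := by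
  rw [gfun_eq r hr]
  exact mul_nonneg hr.le (hfun_nonneg (by positivity))

/-- quadratic lower bound for `hfun` on `(0,1]` -/
lemma hfun_ge_left {r : ℝ} (hr : 0 < r) (hr1 : r ≤ 1) : (1 - r)^2 / 2 ≤ hfun r := by
  set f : ℝ → ℝ := fun x => x - 1 - Real.log x - (1-x)^2/2 with hf
  have key : AntitoneOn f (Set.Icc r 1) := by
    apply antitoneOn_of_deriv_nonpos (convex_Icc r 1)
    · apply ContinuousOn.sub
      apply ContinuousOn.sub
      · fun_prop
      · apply Real.continuousOn_log.mono
        intro x hx; simp at hx ⊢; intro h; rw [h] at hx; linarith [hx.1]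
      · fun_prop
    · intro x hx
      rw [interior_Icc] at hx
      have hx0 : 0 < x := lt_trans hr hx.1
      apply DifferentiableAt.differentiableWithinAt
      apply DifferentiableAt.sub
      apply DifferentiableAt.sub
      · fun_prop
      · exact Real.differentiableAt_log hx0.ne'
      · fun_prop
    · intro x hx
      rw [interior_Icc] at hx
      have hx0 : 0 < x := lt_trans hr hx.1
      have hd : HasDerivAt f (1 - x⁻¹ - (1 - x) * (-1)) x := by
        have h1 : HasDerivAt (fun x : ℝ => x - 1 - Real.log x) (1 - x⁻¹) x :=
          ((hasDerivAt_id x).sub_const 1).sub (Real.hasDerivAt_log hx0.ne')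
        have h2 : HasDerivAt (fun x : ℝ => (1-x)^2/2) ((1 - x) * (-1)) x := by
          have h := (((hasDerivAt_const x (1:ℝ)).sub (hasDerivAt_id x)).pow 2).div_const 2
          refine h.congr_deriv ?_
          simp [id_eq]; try ring
        exact h1.sub h2
      rw [hd.deriv]
      have : 1 - x⁻¹ - (1-x) * (-1) = -(1-x)^2/x := by field_simp; ring
      rw [this]
      apply div_nonpos_of_nonpos_of_nonneg _ hx0.le
      nlinarith [sq_nonneg (1-x)]
  have := key (Set.left_mem_Icc.2 hr1) (Set.right_mem_Icc.2 hr1) hr1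
  simp only [hf, hfun] at this ⊢
  simp [Real.log_one] at this
  linarith

/-- quadratic lower bound for `hfun` on `[1,∞)` -/
lemma hfun_ge_right {r : ℝ} (hr1 : 1 ≤ r) : (r - 1)^2 / (2*r) ≤ hfun r := by
  have hr0 : 0 < r := lt_of_lt_of_le one_pos hr1
  set f : ℝ → ℝ := fun x => x - 1 - Real.log x - (x-1)^2/(2*x) with hf
  have key : MonotoneOn f (Set.Icc 1 r) := by
    apply monotoneOn_of_deriv_nonneg (convex_Icc 1 r)
    · apply ContinuousOn.sub
      apply ContinuousOn.sub
      · fun_prop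
      · apply Real.continuousOn_log.mono
        intro x hx; simp at hx ⊢; intro h; rw [h] at hx; linarith [hx.1]
      · apply ContinuousOn.div
        · fun_prop
        · fun_prop
        · intro x hx; simp at hx; intro h; linarith [hx.1]
    · intro x hx
      rw [interior_Icc] at hx
      have hx0 : 0 < x := lt_trans one_pos hx.1
      apply DifferentiableAt.differentiableWithinAt
      apply DifferentiableAt.sub
      apply DifferentiableAt.sub
      · fun_prop
      · exact Real.differentiableAt_log hx0.ne'
      · apply DifferentiableAt.div
        · fun_prop
        · fun_prop
        · positivity
    · intro x hx
      rw [interior_Icc] at hx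
      have hx0 : 0 < x := lt_trans one_pos hx.1
      have hd : HasDerivAt f (1 - x⁻¹ - (2*(x-1)*(2*x) - (x-1)^2*2)/(2*x)^2) x := by
        have h1 : HasDerivAt (fun x : ℝ => x - 1 - Real.log x) (1 - x⁻¹) x :=
          ((hasDerivAt_id x).sub_const 1).sub (Real.hasDerivAt_log hx0.ne')
        have h2 : HasDerivAt (fun x : ℝ => (x-1)^2/(2*x))
            ((2*(x-1)*(2*x) - (x-1)^2*2)/(2*x)^2) x := by
          have ha : HasDerivAt (fun x : ℝ => (x-1)^2) (2*(x-1)) x := by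
            have h := (((hasDerivAt_id x).sub_const 1).pow 2)
            refine h.congr_deriv ?_
            simp [id_eq]; try ring
          have hb : HasDerivAt (fun x : ℝ => 2*x) 2 x := by
            simpa using (hasDerivAt_id x).const_mul 2
          have h2' := ha.div hb (by positivity)
          exact h2'
          try ring
        exact h1.sub h2
      rw [hd.deriv]
      have heq : 1 - x⁻¹ - (2*(x-1)*(2*x) - (x-1)^2*2)/(2*x)^2 = (x-1)^2/(2*x^2) := by
        field_simp; ring
      rw [heq]; positivity
  have := key (Set.left_mem_Icc.2 hr1) (Set.right_mem_Icc.2 hr1) hr1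
  simp only [hf, hfun] at this ⊢
  simp [Real.log_one] at this
  linarith

lemma gfun_ge_left {r : ℝ} (hr : 0 < r) (hr1 : r ≤ 1) : (1 - r)^2 / 2 ≤ gfun r := by
  rw [gfun_eq r hr]
  have hrr : r⁻¹ * r = 1 := inv_mul_cancel₀ hr.ne'
  have hrp : 0 < r⁻¹ := by positivity
  have h1 : (1:ℝ) ≤ r⁻¹ := by nlinarith
  have := hfun_ge_right h1
  calc (1-r)^2/2 = r * ((r⁻¹-1)^2/(2*r⁻¹)) := by field_simp
  _ ≤ r * hfun r⁻¹ := by apply mul_le_mul_of_nonneg_left this hr.le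

lemma gfun_ge_right {r : ℝ} (hr1 : 1 ≤ r) : (r-1)^2/(2*r) ≤ gfun r := by
  have hr0 : 0 < r := lt_of_lt_of_le one_pos hr1
  rw [gfun_eq r hr0]
  have h1 : 0 < r⁻¹ := by positivity
  have hrr : r⁻¹ * r = 1 := inv_mul_cancel₀ hr0.ne'
  have h2 : r⁻¹ ≤ 1 := by nlinarith
  have := hfun_ge_left h1 h2
  calc (r-1)^2/(2*r) = r * ((1-r⁻¹)^2/2) := by field_simp
  _ ≤ r * hfun r⁻¹ := mul_le_mul_of_nonneg_left this hr0.le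

lemma sqhelp1 {x : ℝ} (q : ℝ) (hx : x ≠ 0) : (1 - q/x)^2/2 = (x-q)^2/(2*x^2) := by
  rw [show 1 - q/x = (x-q)/x by field_simp, div_pow]; ring

lemma sqhelp2 {x q : ℝ} (hx : x ≠ 0) (hq : q ≠ 0) :
    (q/x - 1)^2/(2*(q/x)) = (q-x)^2/(2*x*q) := by
  rw [show q/x - 1 = (q-x)/x by field_simp, div_pow, div_div]
  have hden : x^2 * (2*(q/x)) = 2*x*q := by field_simp
  rw [hden]

lemma amgm_s6 (a b C : ℝ) (hC : 0 < C) : a*b - C*a^2 ≤ b^2/(4*C) := by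
  have h := mul_nonneg (sq_nonneg (b/(2*C) - a)) hC.le
  have hC' : C ≠ 0 := hC.ne'
  have hexp : (b/(2*C) - a)^2 * C = b^2/(4*C) - a*b + C*a^2 := by
    field_simp; ring
  rw [hexp] at h; linarith

/-- per-coordinate bound, `i ∈ S`, decreasing -/
lemma coordS {η x q l : ℝ} (hη0 : 0 < η) (hx : 0 < x) (hq : 0 < q) (hqx : q ≤ x)
    (hl : 0 ≤ l) (hxl : x * l ≤ 1) :
    (x - q) * l - (1/η) * hfun (q/x) ≤ 16 * η * (x * l) := by
  have hr0 : 0 < q/x := by positivity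
  have hr1 : q/x ≤ 1 := by rw [div_le_one hx]; exact hqx
  have hb : (x-q)^2/(2*x^2) ≤ hfun (q/x) := by
    have := hfun_ge_left hr0 hr1
    rw [sqhelp1 q hx.ne'] at this; linarith
  have h1 : (1/η) * ((x-q)^2/(2*x^2)) ≤ (1/η) * hfun (q/x) :=
    mul_le_mul_of_nonneg_left hb (by positivity)
  have h2 : (x-q)*l - (1/(2*η*x^2))*(x-q)^2 ≤ l^2/(4*(1/(2*η*x^2))) :=
    amgm_s6 (x-q) l _ (by positivity)
  have e2 : (1/η) * ((x-q)^2/(2*x^2)) = (1/(2*η*x^2))*(x-q)^2 := by field_simp; try ring; try tauto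
  have e3 : l^2/(4*(1/(2*η*x^2))) = η*x^2*l^2/2 := by field_simp; try ring; try tauto
  have h4 : η*x^2*l^2/2 ≤ 16*η*(x*l) := by
    have hxl0 : 0 ≤ x*l := mul_nonneg hx.le hl
    have h5 : (x*l)*(x*l) ≤ 1*(x*l) := mul_le_mul_of_nonneg_right hxl hxl0
    nlinarith [hη0.le]
  calc (x - q) * l - (1/η) * hfun (q/x)
      ≤ (x - q) * l - (1/η) * ((x-q)^2/(2*x^2)) := by linarith
    _ = (x-q)*l - (1/(2*η*x^2))*(x-q)^2 := by rw [e2]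
    _ ≤ l^2/(4*(1/(2*η*x^2))) := h2
    _ = η*x^2*l^2/2 := e3
    _ ≤ 16*η*(x*l) := h4

/-- per-coordinate bound, `i ∉ S`, `x ≤ 1/2`, decreasing; uses only entropy part -/
lemma coordC {η x q l : ℝ} (hη0 : 0 < η) (hx : 0 < x) (hq : 0 < q) (hqx : q ≤ x)
    (hx2 : x ≤ 1/2) (hl : 0 ≤ l) (hxl : (1-x) * l ≤ 1) :
    (x - q) * l - (1/η) * (x * gfun (q/x)) ≤ 16 * η * (x * l) := by
  have hr0 : 0 < q/x := by positivity
  have hr1 : q/x ≤ 1 := by rw [div_le_one hx]; exact hqx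
  have hl2 : l ≤ 2 := by nlinarith
  have hb : (x-q)^2/(2*x) ≤ x * gfun (q/x) := by
    have := gfun_ge_left hr0 hr1
    rw [sqhelp1 q hx.ne'] at this
    have h' := mul_le_mul_of_nonneg_left this hx.le
    have e : x * ((x-q)^2/(2*x^2)) = (x-q)^2/(2*x) := by field_simp; try ring; try tauto
    linarith [e ▸ h']
  have h1 : (1/η) * ((x-q)^2/(2*x)) ≤ (1/η) * (x * gfun (q/x)) :=
    mul_le_mul_of_nonneg_left hb (by positivity)
  have h2 : (x-q)*l - (1/(2*η*x))*(x-q)^2 ≤ l^2/(4*(1/(2*η*x))) :=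
    amgm_s6 (x-q) l _ (by positivity)
  have e2 : (1/η) * ((x-q)^2/(2*x)) = (1/(2*η*x))*(x-q)^2 := by field_simp; try ring; try tauto
  have e3 : l^2/(4*(1/(2*η*x))) = η*x*l^2/2 := by field_simp; try ring; try tauto
  have h4 : η*x*l^2/2 ≤ 16*η*(x*l) := by
    have hxl0 : 0 ≤ x*l := mul_nonneg hx.le hl
    have h5 : x*l*l ≤ x*l*2 := mul_le_mul_of_nonneg_left hl2 hxl0
    nlinarith [hη0.le]
  calc (x - q) * l - (1/η) * (x * gfun (q/x))
      ≤ (x - q) * l - (1/(2*η*x))*(x-q)^2 := by rw [← e2]; linarith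
    _ ≤ l^2/(4*(1/(2*η*x))) := h2
    _ = η*x*l^2/2 := e3
    _ ≤ 16*η*(x*l) := h4

/-- receiver bound, `i ∈ S` -/
lemma recvS {η Kr x q : ℝ} (hη0 : 0 < η) (hηK : η * (64*Kr) ≤ 1) (hKr : 1 ≤ Kr)
    (hx : 0 < x) (hx1 : x ≤ 1) (hq : x ≤ q) :
    (1/(4*η) + 16*Kr/x) * ((q-x)^2/q) ≤ (1/η) * hfun (q/x) := by
  have hq0 : 0 < q := lt_of_lt_of_le hx hq
  have hr1 : 1 ≤ q/x := by rw [le_div_iff₀ hx]; linarith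
  have hb : (q-x)^2/(2*x*q) ≤ hfun (q/x) := by
    have := hfun_ge_right hr1
    rw [sqhelp2 hx.ne' hq0.ne'] at this; linarith
  have key : 1/(4*η) + 16*Kr/x ≤ 1/(2*η*x) := by
    rw [div_add_div _ _ (by positivity : (4*η) ≠ 0) (by positivity : x ≠ 0),
      div_le_div_iff₀ (by positivity) (by positivity)]
    have h1 : η*(64*Kr)*x ≤ 1*x := mul_le_mul_of_nonneg_right hηK hx.le
    nlinarith [mul_pos hη0 hx, mul_pos (mul_pos hη0 hη0) hx]
  calc (1/(4*η) + 16*Kr/x) * ((q-x)^2/q)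
      ≤ (1/(2*η*x)) * ((q-x)^2/q) := mul_le_mul_of_nonneg_right key (by positivity)
    _ = (1/η) * ((q-x)^2/(2*x*q)) := by field_simp; try ring; try tauto
    _ ≤ (1/η) * hfun (q/x) := mul_le_mul_of_nonneg_left hb (by positivity)

/-- receiver bound, `i ∉ S` -/
lemma recvC {η Kr x q : ℝ} (hη0 : 0 < η) (hKr : 1 ≤ Kr)
    (hx : 0 < x) (hq : x ≤ q) :
    (1/(4*η) + 16*Kr/x) * ((q-x)^2/q) ≤ (1/η) * (x * gfun (q/x)) + (64*Kr) * hfun (q/x) := by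
  have hq0 : 0 < q := lt_of_lt_of_le hx hq
  have hr1 : 1 ≤ q/x := by rw [le_div_iff₀ hx]; linarith
  have hbg : (q-x)^2/(2*q) ≤ x * gfun (q/x) := by
    have := gfun_ge_right hr1
    rw [sqhelp2 hx.ne' hq0.ne'] at this
    have h' := mul_le_mul_of_nonneg_left this hx.le
    have e : x * ((q-x)^2/(2*x*q)) = (q-x)^2/(2*q) := by field_simp; try ring; try tauto
    linarith [e ▸ h']
  have hbh : (q-x)^2/(2*x*q) ≤ hfun (q/x) := by
    have := hfun_ge_right hr1
    rw [sqhelp2 hx.ne' hq0.ne'] at this; linarith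
  have h1 : (1/(4*η)) * ((q-x)^2/q) ≤ (1/η) * (x * gfun (q/x)) := by
    calc (1/(4*η)) * ((q-x)^2/q) ≤ (1/(2*η)) * ((q-x)^2/q) := by
          apply mul_le_mul_of_nonneg_right _ (by positivity)
          rw [div_le_div_iff₀ (by positivity) (by positivity)]; nlinarith
      _ = (1/η) * ((q-x)^2/(2*q)) := by field_simp; try ring; try tauto
      _ ≤ (1/η) * (x * gfun (q/x)) := mul_le_mul_of_nonneg_left hbg (by positivity)
  have h2 : (16*Kr/x) * ((q-x)^2/q) ≤ (64*Kr) * hfun (q/x) := by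
    calc (16*Kr/x) * ((q-x)^2/q) = (32*Kr) * ((q-x)^2/(2*x*q)) := by field_simp; try ring; try tauto
      _ ≤ (32*Kr) * hfun (q/x) := mul_le_mul_of_nonneg_left hbh (by positivity)
      _ ≤ (64*Kr) * hfun (q/x) := by
          apply mul_le_mul_of_nonneg_right _ (le_trans (by positivity) hbh)
          nlinarith
  nlinarith [h1, h2]

/-- core scalar inequality of the hard case -/
lemma hard_core {η Kr β xs ls Δ m E : ℝ} (hη0 : 0 < η) (hηK : η * (64*Kr) ≤ 1)
    (hKr : 1 ≤ Kr) (hβ0 : 0 < β) (hβx : β = 1 - xs) (hxh : 1/2 < xs)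
    (hl : 0 ≤ ls) (hβl : β * ls ≤ 1) (hΔ : 0 < Δ) (hΔm : Δ ≤ m)
    (hE : (1/(4*η) + 16*Kr/β) * (m^2/(β+m)) ≤ E) :
    Δ * ls - E ≤ 16 * η * (xs * ls) := by
  have hm0 : 0 < m := lt_of_lt_of_le hΔ hΔm
  have hmono : Δ^2/(β+Δ) ≤ m^2/(β+m) := by
    rw [div_le_div_iff₀ (by positivity) (by positivity)]
    nlinarith [mul_nonneg (mul_nonneg hΔ.le hm0.le) (sub_nonneg.2 hΔm),
      mul_nonneg (mul_nonneg hβ0.le (sub_nonneg.2 hΔm)) (by linarith : (0:ℝ) ≤ m + Δ)]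
  have hE' : (1/(4*η) + 16*Kr/β) * (Δ^2/(β+Δ)) ≤ E := by
    refine le_trans (mul_le_mul_of_nonneg_left hmono (by positivity)) hE
  have hls : ls ≤ 1/β := by rw [le_div_iff₀ hβ0]; linarith [mul_comm β ls]
  have hrhs0 : 0 ≤ 16 * η * (xs * ls) := by
    apply mul_nonneg (by positivity) (mul_nonneg (by linarith) hl)
  rcases le_or_gt β Δ with hc | hc
  · -- Δ ≥ β : use barrier part
    have h1 : Δ/2 ≤ Δ^2/(β+Δ) := by
      rw [le_div_iff₀ (by positivity)]; nlinarith
    have h2 : (16*Kr/β) * (Δ/2) ≤ (1/(4*η) + 16*Kr/β) * (Δ^2/(β+Δ)) := by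
      apply mul_le_mul _ h1 (by positivity) (by positivity)
      have : (0:ℝ) < 1/(4*η) := by positivity
      linarith
    have h2' : (16*Kr/β)*(Δ/2) ≤ E := le_trans h2 hE'
    have h3 : Δ * ls ≤ Δ/β := by
      calc Δ * ls ≤ Δ * (1/β) := mul_le_mul_of_nonneg_left hls hΔ.le
        _ = Δ/β := by ring
    have e4 : (16*Kr/β)*(Δ/2) = (8*Kr*Δ)/β := by ring
    have h5 : (8*Δ)/β ≤ (8*Kr*Δ)/β := by
      apply (div_le_div_iff_of_pos_right hβ0).2; nlinarith
    have h6 : 0 ≤ Δ/β := by positivity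
    have e5 : (8*Δ)/β = 8*(Δ/β) := by ring
    linarith
  · -- Δ < β : use entropy part
    have h1 : Δ^2/(2*β) ≤ Δ^2/(β+Δ) :=
      div_le_div_of_nonneg_left (sq_nonneg Δ) (by positivity) (by linarith)
    have h2 : (1/(4*η)) * (Δ^2/(2*β)) ≤ E := by
      refine le_trans ?_ hE'
      refine le_trans (mul_le_mul_of_nonneg_left h1 (by positivity)) ?_
      apply mul_le_mul_of_nonneg_right _ (by positivity)
      nlinarith [div_pos (by positivity : (0:ℝ) < 16*Kr) hβ0]
    have e1 : (1/(4*η)) * (Δ^2/(2*β)) = (1/(8*η*β)) * Δ^2 := by field_simp; try ring; try tauto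
    have h3 : Δ*ls - (1/(8*η*β))*Δ^2 ≤ ls^2/(4*(1/(8*η*β))) := amgm_s6 Δ ls _ (by positivity)
    have e2 : ls^2/(4*(1/(8*η*β))) = 2*η*β*ls^2 := by field_simp; try ring; try tauto
    have h4 : 2*η*β*ls^2 ≤ 16*η*(xs*ls) := by nlinarith [mul_nonneg hη0.le hl]
    rw [e1] at h2
    linarith

/-- The pathwise stability bound (static form). `DD i` is the per-coordinate
Bregman divergence of the hybrid regularizer. -/
lemma stab {K : ℕ} (S : Finset (Fin K)) {η : ℝ} (hK : 2 ≤ K) (hη0 : 0 < η)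
    (hηK : η * (64*(K:ℝ)) ≤ 1) (x q l : Fin K → ℝ)
    (hx0 : ∀ i, 0 < x i) (hq0 : ∀ i, 0 < q i) (hx1 : ∀ i, x i < 1)
    (hxs : ∑ i, x i = 1) (hqs : ∑ i, q i = 1)
    (hl0 : ∀ i, 0 ≤ l i) (hlS : ∀ i ∈ S, x i * l i ≤ 1)
    (hlC : ∀ i ∉ S, (1 - x i) * l i ≤ 1) :
    ∑ i, (x i - q i) * l i ≤
      (∑ i, (if i ∈ S then (1/η) * hfun (q i / x i)
        else (1/η) * (x i * gfun (q i / x i)) + (64*(K:ℝ)) * hfun (q i / x i)))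
      + 16 * η * ∑ i, x i * l i := by
  set Kr : ℝ := (K : ℝ) with hKrdef
  have hKr : 1 ≤ Kr := by
    simp only [hKrdef]
    exact_mod_cast le_trans (by norm_num) hK
  set DD : Fin K → ℝ := fun i => if i ∈ S then (1/η) * hfun (q i / x i)
      else (1/η) * (x i * gfun (q i / x i)) + (64*Kr) * hfun (q i / x i) with hDD
  have hr0 : ∀ i, 0 < q i / x i := fun i => div_pos (hq0 i) (hx0 i)
  have hDD0 : ∀ i, 0 ≤ DD i := by
    intro i
    simp only [hDD]
    split
    · exact mul_nonneg (by positivity) (hfun_nonneg (hr0 i))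
    · have := gfun_nonneg (hr0 i)
      have := hfun_nonneg (hr0 i)
      have hx := (hx0 i).le
      positivity
  -- reduce to a sum of per-coordinate terms
  rw [mul_sum, ← sum_add_distrib]
  -- the receiver bound, uniform form
  have hrecv : ∀ i, x i < q i → (1/(4*η) + 16*Kr/(x i)) * ((q i - x i)^2/(q i)) ≤ DD i := by
    intro i hi
    simp only [hDD]
    split
    · exact recvS hη0 hηK hKr (hx0 i) (hx1 i).le hi.le
    · exact recvC hη0 hKr (hx0 i) hi.le
  by_cases hhard : ∃ i, i ∉ S ∧ 1/2 < x i ∧ q i < x i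
  · obtain ⟨iS, hiS, hxS, hdec⟩ := hhard
    set β : ℝ := 1 - x iS with hβ
    have hβ0 : 0 < β := by simp only [hβ]; linarith [hx1 iS]
    have hβh : β < 1/2 := by simp only [hβ]; linarith
    have hxβ : ∀ j, j ≠ iS → x j ≤ β := by
      intro j hj
      have hsub : ({j, iS} : Finset (Fin K)) ⊆ univ := subset_univ _
      have := sum_le_sum_of_subset_of_nonneg hsub (fun i _ _ => (hx0 i).le)
      rw [sum_pair hj] at this
      simp only [hβ]; linarith [hxs ▸ this]
    set Inc : Finset (Fin K) := univ.filter (fun j => x j < q j) with hInc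
    have hiSInc : iS ∉ Inc := by
      simp only [hInc, mem_filter, mem_univ, true_and, not_lt]
      linarith
    set m : ℝ := ∑ j ∈ Inc, (q j - x j) with hm
    set Δ : ℝ := x iS - q iS with hΔdef
    have hΔ0 : 0 < Δ := by simp only [hΔdef]; linarith
    have hΔm : Δ ≤ m := by
      have hsplit : ∑ j ∈ Inc, (q j - x j) + ∑ j ∈ Incᶜ, (q j - x j) = 0 := by
        rw [sum_add_sum_compl]
        rw [sum_sub_distrib, hqs, hxs]; ring
      have hterm : Δ ≤ ∑ j ∈ Incᶜ, (x j - q j) := by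
        apply single_le_sum (f := fun j => x j - q j) _ (by simpa [hInc] using hdec.le)
        intro j hj
        simp only [hInc, mem_compl, mem_filter, mem_univ, true_and, not_lt] at hj
        exact sub_nonneg.2 hj
      have : ∑ j ∈ Incᶜ, (x j - q j) = - ∑ j ∈ Incᶜ, (q j - x j) := by
        rw [← sum_neg_distrib]; apply sum_congr rfl; intros; ring
      simp only [hm]; linarith
    have hm0 : 0 < m := lt_of_lt_of_le hΔ0 hΔm
    have hIncne : Inc.Nonempty := by
      by_contra hne
      rw [not_nonempty_iff_eq_empty] at hne
      rw [hm, hne, sum_empty] at hm0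
      exact lt_irrefl 0 hm0
    have hqpos : 0 < ∑ j ∈ Inc, q j := sum_pos (fun j _ => hq0 j) hIncne
    have hqle : ∑ j ∈ Inc, q j ≤ β + m := by
      have h1 : ∑ j ∈ Inc, q j = ∑ j ∈ Inc, x j + m := by
        simp only [hm]; rw [← sum_add_distrib]; apply sum_congr rfl; intros; ring
      have h2 : ∑ j ∈ Inc, x j ≤ ∑ j ∈ univ.erase iS, x j := by
        apply sum_le_sum_of_subset_of_nonneg _ (fun i _ _ => (hx0 i).le)
        intro j hj
        rw [mem_erase]
        exact ⟨fun hji => hiSInc (hji ▸ hj), mem_univ j⟩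
      have h3 : ∑ j ∈ univ.erase iS, x j = 1 - x iS := by
        rw [sum_erase_eq_sub (mem_univ iS), hxs]
      simp only [hβ]; linarith
    -- Sedrakyan
    have hsed : m^2/(β + m) ≤ ∑ j ∈ Inc, (q j - x j)^2/(q j) := by
      have h1 := sq_sum_div_le_sum_sq_div Inc (fun j => q j - x j) (fun j _ => hq0 j)
      have h2 : m^2/(β+m) ≤ m^2/(∑ j ∈ Inc, q j) :=
        div_le_div_of_nonneg_left (sq_nonneg m) hqpos hqle
      exact le_trans h2 (by simpa [hm] using h1)
    -- receivers pay
    have hE : (1/(4*η) + 16*Kr/β) * (m^2/(β+m)) ≤ ∑ j ∈ Inc, DD j := by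
      calc (1/(4*η) + 16*Kr/β) * (m^2/(β+m))
          ≤ (1/(4*η) + 16*Kr/β) * ∑ j ∈ Inc, (q j - x j)^2/(q j) := by
            apply mul_le_mul_of_nonneg_left hsed (by positivity)
        _ = ∑ j ∈ Inc, (1/(4*η) + 16*Kr/β) * ((q j - x j)^2/(q j)) := mul_sum _ _ _
        _ ≤ ∑ j ∈ Inc, DD j := by
            apply sum_le_sum
            intro j hj
            have hjx : x j < q j := by simpa [hInc] using hj
            have hjne : j ≠ iS := by
              intro h; rw [h] at hjx; linarith
            refine le_trans ?_ (hrecv j hjx)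
            apply mul_le_mul_of_nonneg_right _ (div_nonneg (sq_nonneg _) (hq0 j).le)
            have h16 : 16*Kr/β ≤ 16*Kr/(x j) :=
              div_le_div_of_nonneg_left (by positivity) (hx0 j) (hxβ j hjne)
            linarith
    -- the main hard-case inequality
    have hmain : Δ * l iS - ∑ j ∈ Inc, DD j ≤ 16*η*(x iS * l iS) := by
      apply hard_core hη0 hηK hKr hβ0 hβ hxS (hl0 iS) _ hΔ0 hΔm hE
      have := hlC iS hiS
      simpa [hβ] using this
    -- assemble
    have hA : ∀ i ∈ univ.erase iS, (x i - q i) * l i ≤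
        (DD i + 16*η*(x i * l i)) - (if i ∈ Inc then DD i else 0) := by
      intro i hi
      have hine : i ≠ iS := (mem_erase.1 hi).1
      by_cases hiInc : i ∈ Inc
      · rw [if_pos hiInc]
        have hxq : x i < q i := by simpa [hInc] using hiInc
        have h1 : (x i - q i) * l i ≤ 0 :=
          mul_nonpos_of_nonpos_of_nonneg (by linarith) (hl0 i)
        have t3 : 0 ≤ 16*η*(x i * l i) :=
          mul_nonneg (by positivity) (mul_nonneg (hx0 i).le (hl0 i))
        linarith
      · rw [if_neg hiInc]
        have hqx : q i ≤ x i := by simpa [hInc, not_lt] using hiInc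
        have hg := gfun_nonneg (hr0 i)
        have hh := hfun_nonneg (hr0 i)
        by_cases hiS' : i ∈ S
        · simp only [hDD, if_pos hiS']
          linarith [coordS hη0 (hx0 i) (hq0 i) hqx (hl0 i) (hlS i hiS')]
        · simp only [hDD, if_neg hiS']
          have hxhalf : x i ≤ 1/2 := le_trans (hxβ i hine) (le_of_lt hβh)
          have := coordC hη0 (hx0 i) (hq0 i) hqx hxhalf (hl0 i) (hlC i hiS')
          have hKr64 : (0:ℝ) ≤ 64*Kr := by positivity
          nlinarith [mul_nonneg hKr64 hh]
    have hsumA := sum_le_sum hA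
    rw [sum_sub_distrib] at hsumA
    have hfilter : ∑ i ∈ univ.erase iS, (if i ∈ Inc then DD i else 0)
        = ∑ i ∈ Inc, DD i := by
      rw [sum_ite_mem]
      congr 1
      ext j
      simp only [mem_inter, mem_erase, mem_univ, and_true, true_and]
      constructor
      · rintro ⟨_, hj⟩; exact hj
      · intro hj
        have hne : j ≠ iS := by
          intro h
          rw [h] at hj
          have : x iS < q iS := by simpa [hInc] using hj
          linarith
        exact ⟨hne, hj⟩
    rw [hfilter] at hsumA
    rw [hΔdef] at hmain
    have hDDiS := hDD0 iS
    calc ∑ i, (x i - q i) * l i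
        = (x iS - q iS) * l iS + ∑ i ∈ univ.erase iS, (x i - q i) * l i :=
          (add_sum_erase _ _ (mem_univ iS)).symm
      _ ≤ (DD iS + 16*η*(x iS * l iS)) + ∑ i ∈ univ.erase iS, (DD i + 16*η*(x i * l i)) := by
          linarith
      _ = ∑ i, (DD i + 16*η*(x i * l i)) :=
          add_sum_erase _ (fun i => DD i + 16*η*(x i * l i)) (mem_univ iS)
  · -- easy case: pure per-coordinate bounds
    apply sum_le_sum
    intro i _
    rcases le_or_gt (q i) (x i) with hqx | hqx
    · by_cases hiS : i ∈ S
      · simp only [hDD, if_pos hiS]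
        linarith [coordS hη0 (hx0 i) (hq0 i) hqx (hl0 i) (hlS i hiS)]
      · simp only [hDD, if_neg hiS]
        have hg := gfun_nonneg (hr0 i)
        have hh := hfun_nonneg (hr0 i)
        rcases eq_or_lt_of_le hqx with heq | hlt
        · have h0 : (x i - q i) * l i = 0 := by rw [heq]; ring
          have t1 : 0 ≤ (1/η) * (x i * gfun (q i / x i)) :=
            mul_nonneg (by positivity) (mul_nonneg (hx0 i).le hg)
          have t2 : 0 ≤ (64*Kr) * hfun (q i / x i) := mul_nonneg (by positivity) hh
          have t3 : 0 ≤ 16*η*(x i * l i) :=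
            mul_nonneg (by positivity) (mul_nonneg (hx0 i).le (hl0 i))
          linarith
        · have hxhalf : x i ≤ 1/2 := by
            by_contra hgt
            push_neg at hgt
            exact hhard ⟨i, hiS, hgt, hlt⟩
          have := coordC hη0 (hx0 i) (hq0 i) hqx hxhalf (hl0 i) (hlC i hiS)
          have hKr64 : (0:ℝ) ≤ 64*Kr := by positivity
          nlinarith [mul_nonneg hKr64 hh]
    · -- increasing coordinate: LHS ≤ 0
      have h1 : (x i - q i) * l i ≤ 0 :=
        mul_nonpos_of_nonpos_of_nonneg (by linarith) (hl0 i)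
      have h2 : 0 ≤ 16*η*(x i * l i) := by
        have := mul_nonneg (hx0 i).le (hl0 i); positivity
      have := hDD0 i
      simp only [hDD] at *
      linarith

noncomputable def psiCf {K : ℕ} (S : Finset (Fin K)) (η c : ℝ) (x : Fin K → ℝ) :
    Fin K → ℝ := fun i =>
  if i ∈ S then -(1/η) * (x i)⁻¹ else (1/η) * (Real.log (x i) + 1) - c * (x i)⁻¹

noncomputable def psiL {K : ℕ} (S : Finset (Fin K)) (η c : ℝ) (x : Fin K → ℝ) :
    (Fin K → ℝ) →L[ℝ] ℝ :=
  ∑ i, psiCf S η c x i • (ContinuousLinearMap.proj i : (Fin K → ℝ) →L[ℝ] ℝ)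

lemma psiL_apply {K : ℕ} (S : Finset (Fin K)) (η c : ℝ) (x v : Fin K → ℝ) :
    psiL S η c x v = ∑ i, psiCf S η c x i * v i := by
  simp [psiL, ContinuousLinearMap.sum_apply, ContinuousLinearMap.smul_apply,
    ContinuousLinearMap.proj_apply, smul_eq_mul]

lemma hasFDerivAt_psi {K : ℕ} (S : Finset (Fin K)) (η c : ℝ) (hη : η ≠ 0)
    (x : Fin K → ℝ) (hx : ∀ i, 0 < x i) :
    HasFDerivAt (fun p => (1 / η) * ∑ i ∈ S, Real.log (1 / p i)
      + (1 / η) * ∑ i ∈ Sᶜ, p i * Real.log (p i)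
      + c * ∑ i ∈ Sᶜ, Real.log (1 / p i)) (psiL S η c x) x := by
  have hlog : ∀ i : Fin K, HasFDerivAt (fun p : Fin K → ℝ => Real.log (1 / p i))
      (-((x i)⁻¹ • (ContinuousLinearMap.proj i : (Fin K → ℝ) →L[ℝ] ℝ))) x := by
    intro i
    have heq : (fun p : Fin K → ℝ => Real.log (1 / p i))
        = fun p : Fin K → ℝ => -Real.log (p i) := by
      funext p; rw [one_div, Real.log_inv]
    rw [heq]
    have h1 : HasFDerivAt (fun p : Fin K → ℝ => Real.log (p i))
        ((x i)⁻¹ • (ContinuousLinearMap.proj i : (Fin K → ℝ) →L[ℝ] ℝ)) x :=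
      by have := (Real.hasDerivAt_log (hx i).ne').comp_hasFDerivAt x
          (ContinuousLinearMap.proj i : (Fin K → ℝ) →L[ℝ] ℝ).hasFDerivAt; exact this
    exact h1.neg
  have hmul : ∀ i : Fin K, HasFDerivAt (fun p : Fin K → ℝ => p i * Real.log (p i))
      ((Real.log (x i) + 1) • (ContinuousLinearMap.proj i : (Fin K → ℝ) →L[ℝ] ℝ)) x := by
    intro i
    exact (Real.hasDerivAt_mul_log (hx i).ne').comp_hasFDerivAt x
      (ContinuousLinearMap.proj i : (Fin K → ℝ) →L[ℝ] ℝ).hasFDerivAt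
  have h1 : HasFDerivAt (fun p : Fin K → ℝ => ∑ i ∈ S, Real.log (1 / p i))
      (∑ i ∈ S, -((x i)⁻¹ • (ContinuousLinearMap.proj i : (Fin K → ℝ) →L[ℝ] ℝ))) x :=
    HasFDerivAt.fun_sum (fun i _ => hlog i)
  have h2 : HasFDerivAt (fun p : Fin K → ℝ => ∑ i ∈ Sᶜ, p i * Real.log (p i))
      (∑ i ∈ Sᶜ, (Real.log (x i) + 1) • (ContinuousLinearMap.proj i : (Fin K → ℝ) →L[ℝ] ℝ)) x :=
    HasFDerivAt.fun_sum (fun i _ => hmul i)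
  have h3 : HasFDerivAt (fun p : Fin K → ℝ => ∑ i ∈ Sᶜ, Real.log (1 / p i))
      (∑ i ∈ Sᶜ, -((x i)⁻¹ • (ContinuousLinearMap.proj i : (Fin K → ℝ) →L[ℝ] ℝ))) x :=
    HasFDerivAt.fun_sum (fun i _ => hlog i)
  have hsum := ((h1.const_mul (1/η)).add (h2.const_mul (1/η))).add (h3.const_mul c)
  refine hsum.congr_fderiv (Eq.symm ?_)
  refine ContinuousLinearMap.ext fun v => ?_
  rw [psiL_apply]
  simp only [ContinuousLinearMap.add_apply, ContinuousLinearMap.smul_apply,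
    ContinuousLinearMap.sum_apply, ContinuousLinearMap.neg_apply,
    ContinuousLinearMap.proj_apply, smul_eq_mul]
  rw [← Finset.sum_add_sum_compl S (fun i => psiCf S η c x i * v i)]
  rw [Finset.mul_sum, Finset.mul_sum, Finset.mul_sum]
  rw [add_assoc, ← Finset.sum_add_distrib]
  congr 1
  · exact Finset.sum_congr rfl fun i hi => by simp only [psiCf, if_pos hi]; ring
  · exact Finset.sum_congr rfl fun i hi => by
      rw [Finset.mem_compl] at hi
      simp only [psiCf, if_neg hi]; ring

lemma sum_ite_split {K : ℕ} (S : Finset (Fin K)) (f g : Fin K → ℝ) :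
    ∑ i, (if i ∈ S then f i else g i) = ∑ i ∈ S, f i + ∑ i ∈ Sᶜ, g i := by
  rw [← Finset.sum_add_sum_compl S]
  congr 1
  · exact Finset.sum_congr rfl (fun i hi => by simp [hi])
  · exact Finset.sum_congr rfl (fun i hi => by
      rw [Finset.mem_compl] at hi; simp [hi])

lemma idS_scalar {η a b : ℝ} (ha : 0 < a) (hb : 0 < b) (hη : η ≠ 0) :
    (1/η) * hfun (a/b)
      = (1/η) * Real.log (1/a) - (1/η) * Real.log (1/b) - (-(1/η) * b⁻¹) * (a - b) := by
  simp only [hfun, one_div, Real.log_inv]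
  rw [Real.log_div ha.ne' hb.ne']
  field_simp
  ring

lemma idC_scalar {η c a b : ℝ} (ha : 0 < a) (hb : 0 < b) (hη : η ≠ 0) :
    (1/η) * (b * gfun (a/b)) + c * hfun (a/b)
      = ((1/η) * (a * Real.log a) + c * Real.log (1/a))
        - ((1/η) * (b * Real.log b) + c * Real.log (1/b))
        - ((1/η) * (Real.log b + 1) - c * b⁻¹) * (a - b) := by
  simp only [hfun, gfun, one_div, Real.log_inv]
  rw [Real.log_div ha.ne' hb.ne']
  field_simp
  ring

lemma breg_formula_s6 {K : ℕ} (S : Finset (Fin K)) (η c : ℝ) (hη : η ≠ 0)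
    (ψ : (Fin K → ℝ) → ℝ)
    (hψ : ψ = fun p => (1 / η) * ∑ i ∈ S, Real.log (1 / p i)
      + (1 / η) * ∑ i ∈ Sᶜ, p i * Real.log (p i)
      + c * ∑ i ∈ Sᶜ, Real.log (1 / p i))
    (a b : Fin K → ℝ) (ha : ∀ i, 0 < a i) (hb : ∀ i, 0 < b i) :
    breg ψ a b = ∑ i, (if i ∈ S then (1/η) * hfun (a i / b i)
      else (1/η) * (b i * gfun (a i / b i)) + c * hfun (a i / b i)) := by
  have hL := hasFDerivAt_psi S η c hη b hb
  rw [← hψ] at hL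
  rw [breg, hL.fderiv, psiL_apply, hψ]
  simp only [Pi.sub_apply]
  rw [sum_ite_split S]
  have hsplit : ∑ i, psiCf S η c b i * (a i - b i)
      = ∑ i ∈ S, psiCf S η c b i * (a i - b i)
        + ∑ i ∈ Sᶜ, psiCf S η c b i * (a i - b i) :=
    (Finset.sum_add_sum_compl S _).symm
  rw [hsplit]
  have idS : ∀ i ∈ S, (1/η) * hfun (a i / b i) =
      (1/η) * Real.log (1 / a i) - (1/η) * Real.log (1 / b i)
        - psiCf S η c b i * (a i - b i) := by
    intro i hi
    simp only [psiCf, if_pos hi]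
    exact idS_scalar (ha i) (hb i) hη
  have idC : ∀ i ∈ Sᶜ, (1/η) * (b i * gfun (a i / b i)) + c * hfun (a i / b i) =
      ((1/η) * (a i * Real.log (a i)) + c * Real.log (1 / a i))
      - ((1/η) * (b i * Real.log (b i)) + c * Real.log (1 / b i))
      - psiCf S η c b i * (a i - b i) := by
    intro i hi
    rw [Finset.mem_compl] at hi
    simp only [psiCf, if_neg hi]
    exact idC_scalar (ha i) (hb i) hη
  rw [Finset.sum_congr rfl idS, Finset.sum_congr rfl idC]
  rw [Finset.mul_sum, Finset.mul_sum, Finset.mul_sum, Finset.mul_sum, Finset.mul_sum,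
    Finset.mul_sum]
  simp only [Finset.sum_sub_distrib, Finset.sum_add_distrib]
  ring

/-- loss functional as a continuous linear map -/
noncomputable def linL {K : ℕ} (l : Fin K → ℝ) : (Fin K → ℝ) →L[ℝ] ℝ :=
  ∑ i, l i • (ContinuousLinearMap.proj i : (Fin K → ℝ) →L[ℝ] ℝ)

lemma linL_apply {K : ℕ} (l v : Fin K → ℝ) : linL l v = ∑ i, l i * v i := by
  simp [linL, ContinuousLinearMap.sum_apply, ContinuousLinearMap.smul_apply,
    ContinuousLinearMap.proj_apply, smul_eq_mul]

lemma deriv_nonneg_of_min {g : ℝ → ℝ} {d : ℝ} (hd : HasDerivAt g d 0)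
    (hmin : ∀ s ∈ Set.Icc (0:ℝ) 1, g 0 ≤ g s) : 0 ≤ d := by
  rw [hasDerivAt_iff_tendsto_slope] at hd
  have hsub : Set.Ioi (0:ℝ) ⊆ {(0:ℝ)}ᶜ := by
    intro x hx
    simp only [Set.mem_compl_iff, Set.mem_singleton_iff]
    exact ne_of_gt hx
  have h2 : Tendsto (slope g 0) (nhdsWithin 0 (Set.Ioi 0)) (nhds d) :=
    hd.mono_left (nhdsWithin_mono 0 hsub)
  refine ge_of_tendsto h2 ?_
  filter_upwards [Ioc_mem_nhdsGT_of_mem (Set.left_mem_Ico.2 one_pos)] with s hs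
  have hg := hmin s ⟨hs.1.le, hs.2⟩
  rw [slope_def_field]
  apply div_nonneg (by linarith) (by linarith [hs.1])

lemma tele (f : ℕ → ℝ) (T : ℕ) :
    ∑ t ∈ Finset.Icc 1 T, (f t - f (t+1)) = f 1 - f (T+1) := by
  induction T with
  | zero => simp
  | succ n ih =>
      rw [Finset.sum_Icc_succ_top (by omega : 1 ≤ n + 1), ih]
      ring

/-- Pathwise small-loss regret bound underlying Theorem 3 of the paper: OMD
with log-barrier on the self-looped arms `S` and entropy-plus-log-barrier on
the remaining arms. -/
theorem stmt6 (K T : ℕ) (hK : 2 ≤ K) (hT : 2 * K ≤ T)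
    (S : Finset (Fin K)) (η : ℝ) (hη0 : 0 < η) (hη : η ≤ 1 / (64 * K))
    (Ω : Set (Fin K → ℝ))
    (hΩ : Ω = {p | p ∈ stdSimplex ℝ (Fin K) ∧ ∀ i, 1 / (T : ℝ) ≤ p i})
    (ψ : (Fin K → ℝ) → ℝ)
    (hψ : ψ = fun p => (1 / η) * ∑ i ∈ S, Real.log (1 / p i)
      + (1 / η) * ∑ i ∈ Sᶜ, p i * Real.log (p i)
      + (64 * (K : ℝ)) * ∑ i ∈ Sᶜ, Real.log (1 / p i))
    (p ℓ : ℕ → Fin K → ℝ)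
    (hp1 : p 1 ∈ Ω)
    (hℓ0 : ∀ t ∈ Finset.Icc 1 T, ∀ i, 0 ≤ ℓ t i)
    (hℓS : ∀ t ∈ Finset.Icc 1 T, ∀ i ∈ S, ℓ t i ≤ 1 / p t i)
    (hℓSc : ∀ t ∈ Finset.Icc 1 T, ∀ i ∉ S, ℓ t i ≤ 1 / (1 - p t i))
    (hupd : ∀ t ∈ Finset.Icc 1 T, p (t + 1) ∈ Ω ∧ ∀ q ∈ Ω,
      (∑ i, p (t + 1) i * ℓ t i) + breg ψ (p (t + 1)) (p t)
        ≤ (∑ i, q i * ℓ t i) + breg ψ q (p t)) :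
    ∀ u ∈ Ω,
      ∑ t ∈ Finset.Icc 1 T, ∑ i, (p t i - u i) * ℓ t i ≤
        breg ψ u (p 1) + 16 * η * ∑ t ∈ Finset.Icc 1 T, ∑ i, p t i * ℓ t i := by
  intro u hu
  have hKR : (2:ℝ) ≤ (K:ℝ) := by exact_mod_cast hK
  have hT0 : 0 < T := by omega
  have hTR : (0:ℝ) < (T:ℝ) := by exact_mod_cast hT0
  have hηK : η * (64*(K:ℝ)) ≤ 1 := by
    rw [le_div_iff₀ (by positivity : (0:ℝ) < 64 * (K:ℝ))] at hη
    linarith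
  -- membership facts
  have hmem : ∀ w ∈ Ω, (∀ i, 0 < w i) ∧ (∀ i, w i < 1) ∧ (∑ i, w i = 1) := by
    intro w hw
    rw [hΩ] at hw
    obtain ⟨hws, hwl⟩ := hw
    have hsum : ∑ i, w i = 1 := hws.2
    have hpos : ∀ i, 0 < w i := fun i => lt_of_lt_of_le (by positivity) (hwl i)
    refine ⟨hpos, fun i => ?_, hsum⟩
    have : Nontrivial (Fin K) := Fin.nontrivial_iff_two_le.mpr hK
    obtain ⟨j, hj⟩ := exists_ne i
    have hsub : ({j, i} : Finset (Fin K)) ⊆ univ := subset_univ _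
    have hss := sum_le_sum_of_subset_of_nonneg hsub (fun k _ _ => (hpos k).le)
    rw [sum_pair hj] at hss
    rw [hsum] at hss
    linarith [hpos j]
  have hΩp : ∀ t, 1 ≤ t → t ≤ T + 1 → p t ∈ Ω := by
    intro t
    induction t with
    | zero => omega
    | succ n _ =>
        intro h1 h2
        rcases Nat.lt_or_ge n 1 with h | h
        · interval_cases n
          exact hp1
        · exact (hupd n (mem_Icc.2 ⟨h, by omega⟩)).1
  set c : ℝ := 64*(K:ℝ) with hc
  -- the key per-step inequality
  have step : ∀ t ∈ Finset.Icc 1 T,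
      ∑ i, (p t i - u i) * ℓ t i ≤ 16*η*(∑ i, p t i * ℓ t i)
        + (breg ψ u (p t) - breg ψ u (p (t+1))) := by
    intro t ht
    have htIcc := ht
    rw [mem_Icc] at ht
    have hxΩ : p t ∈ Ω := hΩp t ht.1 (by omega)
    have hyΩ : p (t+1) ∈ Ω := hΩp (t+1) (by omega) (by omega)
    obtain ⟨hx0, hx1, hxs⟩ := hmem _ hxΩ
    obtain ⟨hy0, hy1, hys⟩ := hmem _ hyΩ
    obtain ⟨hu0, hu1, hus⟩ := hmem _ hu
    -- derivative facts
    have hFx : HasFDerivAt ψ (psiL S η c (p t)) (p t) := by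
      have := hasFDerivAt_psi S η c hη0.ne' (p t) hx0
      rwa [← hψ] at this
    have hFy : HasFDerivAt ψ (psiL S η c (p (t+1))) (p (t+1)) := by
      have := hasFDerivAt_psi S η c hη0.ne' (p (t+1)) hy0
      rwa [← hψ] at this
    -- variational inequality
    have hVI : 0 ≤ (∑ i, ℓ t i * (u i - p (t+1) i))
        + (psiL S η c (p (t+1)) (u - p (t+1)) - psiL S η c (p t) (u - p (t+1))) := by
      have hbreg_fun : (fun q : Fin K → ℝ => breg ψ q (p t))
          = fun q => ψ q - ψ (p t) - (psiL S η c (p t)) (q - (p t)) := by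
        funext q; rw [breg, hFx.fderiv]
      have hb1 : HasFDerivAt (fun q : Fin K → ℝ => (psiL S η c (p t)) (q - (p t)))
          (psiL S η c (p t)) (p (t+1)) := by
        have heq : (fun q : Fin K → ℝ => (psiL S η c (p t)) (q - (p t)))
            = fun q => (psiL S η c (p t)) q - (psiL S η c (p t)) (p t) := by
          funext q; rw [map_sub]
        rw [heq]
        exact ((psiL S η c (p t)).hasFDerivAt).sub_const _
      have h2 : HasFDerivAt (fun q : Fin K → ℝ => breg ψ q (p t))
          (psiL S η c (p (t+1)) - psiL S η c (p t)) (p (t+1)) := by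
        rw [hbreg_fun]
        exact (hFy.sub_const (ψ (p t))).sub hb1
      have hlin : HasFDerivAt (fun q : Fin K → ℝ => ∑ i, q i * ℓ t i)
          (linL (ℓ t)) (p (t+1)) :=
        HasFDerivAt.fun_sum (fun i _ =>
          ((ContinuousLinearMap.proj i : (Fin K → ℝ) →L[ℝ] ℝ).hasFDerivAt).mul_const (ℓ t i))
      have hF : HasFDerivAt (fun q : Fin K → ℝ => (∑ i, q i * ℓ t i) + breg ψ q (p t))
          (linL (ℓ t) + (psiL S η c (p (t+1)) - psiL S η c (p t))) (p (t+1)) :=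
        hlin.add h2
      -- path
      have hγ : HasDerivAt (fun s : ℝ => p (t+1) + s • (u - p (t+1)))
          (u - p (t+1)) 0 := by
        simpa using (((hasDerivAt_id (0:ℝ)).smul_const (u - p (t+1))).const_add (p (t+1)))
      have hg : HasDerivAt
          (fun s : ℝ => (fun q : Fin K → ℝ => (∑ i, q i * ℓ t i) + breg ψ q (p t))
            (p (t+1) + s • (u - p (t+1))))
          ((linL (ℓ t) + (psiL S η c (p (t+1)) - psiL S η c (p t))) (u - p (t+1))) 0 := by
        exact (hF.comp_hasDerivAt_of_eq 0 hγ (by simp)).congr_deriv rfl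
      have hmin : ∀ s ∈ Set.Icc (0:ℝ) 1,
          (fun s : ℝ => (fun q : Fin K → ℝ => (∑ i, q i * ℓ t i) + breg ψ q (p t))
            (p (t+1) + s • (u - p (t+1)))) 0
          ≤ (fun s : ℝ => (fun q : Fin K → ℝ => (∑ i, q i * ℓ t i) + breg ψ q (p t))
            (p (t+1) + s • (u - p (t+1)))) s := by
        intro s hs
        simp only [zero_smul, add_zero]
        have hseg : p (t+1) + s • (u - p (t+1)) ∈ Ω := by
          rw [hΩ]
          rw [hΩ] at hyΩ hu
          obtain ⟨⟨hyn, hysum⟩, hyl⟩ := hyΩ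
          obtain ⟨⟨hun, husum⟩, hul⟩ := hu
          constructor
          · constructor
            · intro i
              simp only [Pi.add_apply, Pi.smul_apply, Pi.sub_apply, smul_eq_mul]
              nlinarith [hyn i, hun i, hs.1, hs.2, hyl i, hul i, hTR]
            · simp only [Pi.add_apply, Pi.smul_apply, Pi.sub_apply, smul_eq_mul]
              rw [Finset.sum_add_distrib, ← Finset.mul_sum, Finset.sum_sub_distrib]
              rw [hysum, husum]
              ring
          · intro i
            simp only [Pi.add_apply, Pi.smul_apply, Pi.sub_apply, smul_eq_mul]
            have h1 := hyl i
            have h2 := hul i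
            nlinarith [hs.1, hs.2]
        exact (hupd t htIcc).2 _ hseg
      have := deriv_nonneg_of_min hg hmin
      simp only [ContinuousLinearMap.add_apply, ContinuousLinearMap.sub_apply] at this
      rw [linL_apply] at this
      have hsub : ∀ i, (u - p (t+1)) i = u i - p (t+1) i := fun i => rfl
      simp only [Pi.sub_apply] at this
      linarith
    -- stability
    have hstab : ∑ i, (p t i - p (t+1) i) * ℓ t i - breg ψ (p (t+1)) (p t)
        ≤ 16 * η * ∑ i, p t i * ℓ t i := by
      have hbf := breg_formula_s6 S η c hη0.ne' ψ hψ (p (t+1)) (p t) hy0 hx0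
      have hst := stab S hK hη0 hηK (p t) (p (t+1)) (ℓ t) hx0 hy0 hx1 hxs hys
        (hℓ0 t htIcc)
        (fun i hi => by
          have := hℓS t htIcc i hi
          rw [le_div_iff₀ (hx0 i)] at this
          linarith [mul_comm (ℓ t i) (p t i)])
        (fun i hi => by
          have := hℓSc t htIcc i hi
          rw [le_div_iff₀ (by linarith [hx1 i] : (0:ℝ) < 1 - p t i)] at this
          linarith [mul_comm (ℓ t i) (1 - p t i)])
      rw [← hc] at hst
      rw [hbf]
      linarith
    -- three-point identity assembly
    have e1 : breg ψ u (p t) = ψ u - ψ (p t)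
        - (psiL S η c (p t) u - psiL S η c (p t) (p t)) := by
      rw [breg, hFx.fderiv, map_sub]
    have e2 : breg ψ u (p (t+1)) = ψ u - ψ (p (t+1))
        - (psiL S η c (p (t+1)) u - psiL S η c (p (t+1)) (p (t+1))) := by
      rw [breg, hFy.fderiv, map_sub]
    have e3 : breg ψ (p (t+1)) (p t) = ψ (p (t+1)) - ψ (p t)
        - (psiL S η c (p t) (p (t+1)) - psiL S η c (p t) (p t)) := by
      rw [breg, hFx.fderiv, map_sub]
    have e4 : psiL S η c (p (t+1)) (u - p (t+1))
        = psiL S η c (p (t+1)) u - psiL S η c (p (t+1)) (p (t+1)) := map_sub _ _ _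
    have e5 : psiL S η c (p t) (u - p (t+1))
        = psiL S η c (p t) u - psiL S η c (p t) (p (t+1)) := map_sub _ _ _
    have s1 : ∑ i, (p t i - u i) * ℓ t i
        = ∑ i, p t i * ℓ t i - ∑ i, u i * ℓ t i := by
      rw [← Finset.sum_sub_distrib]
      exact Finset.sum_congr rfl fun i _ => by ring
    have s2 : ∑ i, (p t i - p (t+1) i) * ℓ t i
        = ∑ i, p t i * ℓ t i - ∑ i, p (t+1) i * ℓ t i := by
      rw [← Finset.sum_sub_distrib]
      exact Finset.sum_congr rfl fun i _ => by ring
    have s3 : ∑ i, ℓ t i * (u i - p (t+1) i)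
        = ∑ i, u i * ℓ t i - ∑ i, p (t+1) i * ℓ t i := by
      rw [← Finset.sum_sub_distrib]
      exact Finset.sum_congr rfl fun i _ => by ring
    rw [e4, e5, s3] at hVI
    rw [s2] at hstab
    rw [s1, e1, e2]
    linarith
  -- sum up
  have hsum := Finset.sum_le_sum step
  have htele : ∑ t ∈ Finset.Icc 1 T,
      (breg ψ u (p t) - breg ψ u (p (t+1))) = breg ψ u (p 1) - breg ψ u (p (T+1)) :=
    tele (fun t => breg ψ u (p t)) T
  have hlast : 0 ≤ breg ψ u (p (T+1)) := by
    obtain ⟨hu0, _, _⟩ := hmem _ hu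
    obtain ⟨hz0, _, _⟩ := hmem _ (hΩp (T+1) (by omega) (by omega))
    rw [breg_formula_s6 S η c hη0.ne' ψ hψ u (p (T+1)) hu0 hz0]
    apply Finset.sum_nonneg
    intro i _
    have hr : 0 < u i / p (T+1) i := div_pos (hu0 i) (hz0 i)
    split
    · exact mul_nonneg (by positivity) (hfun_nonneg hr)
    · have h1 := gfun_nonneg hr
      have h2 := hfun_nonneg hr
      have h3 := (hz0 i).le
      have hcpos : (0:ℝ) ≤ c := by rw [hc]; positivity
      have := mul_nonneg h3 h1
      positivity
  rw [Finset.sum_add_distrib, htele] at hsum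
  rw [Finset.mul_sum]
  linarith
end

section
/- Fix integers K ≥ 2 and T ≥ 1 and a nonempty subset C ⊆ [K]. Let Ω = {p ∈ Δ(K) : p_i ≥ 1/(|C|·T) for all i ∈ C, and p_i = 0 for all i ∉ C}. Let p̃_1 be the uniform distribution on C, let ℓ̃_1, …, ℓ̃_T ∈ ℝ^K be nonnegative vectors, define η_t = 1/√(1 + Σ_{τ=1}^t Σ_{i=1}^K p̃_{τ,i}·ℓ̃_{τ,i}²) and ψ_t(p) = (1/η_t)·Σ_{i∈C} p_i ln p_i, and for each t let p̃_{t+1} be a minimizer over Ω of p ↦ ⟨p, ℓ̃_t⟩ + D_{ψ_t}(p, p̃_t) (with the convention 0·ln 0 = 0, all iterates being supported on C). Then for every u ∈ Ω: Σ_{t=1}^T ⟨p̃_t − u, ℓ̃_t⟩ ≤ ln K + (ln(KT) + 2)·√(1 + Σ_{t=1}^T Σ_{i=1}^K p̃_{t,i}·ℓ̃_{t,i}²). -/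
open Finset

lemma exp_neg_le_quad (x : ℝ) (hx : 0 ≤ x) : Real.exp (-x) ≤ 1 - x + x ^ 2 := by
  have h1 : (0:ℝ) < 1 + x := by linarith
  have h2 : 1 + x ≤ Real.exp x := by linarith [Real.add_one_le_exp x]
  have h3 : Real.exp (-x) = (Real.exp x)⁻¹ := Real.exp_neg x
  have h4 : (Real.exp x)⁻¹ ≤ (1 + x)⁻¹ := by
    apply inv_anti₀ h1 h2
  have h5 : (1 + x)⁻¹ ≤ 1 - x + x ^ 2 := by
    rw [inv_le_iff_one_le_mul₀ h1]
    nlinarith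
  linarith [h3 ▸ h4]

lemma key_stab (p q x : ℝ) (hp : 0 < p) (hq : 0 < q) (hx : 0 ≤ x) :
    (p - q) * x ≤ q * Real.log (q / p) + p - q + p * x ^ 2 := by
  have hpe : 0 < p * Real.exp (-x) / q := by positivity
  have h1 := Real.log_le_sub_one_of_pos hpe
  have h2 : Real.log (p * Real.exp (-x) / q) = Real.log p + (-x) - Real.log q := by
    rw [Real.log_div (by positivity) hq.ne', Real.log_mul hp.ne' (Real.exp_ne_zero _),
      Real.log_exp]
  rw [h2] at h1
  have h3 : q * (Real.log p + (-x) - Real.log q) ≤ q * (p * Real.exp (-x) / q - 1) :=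
    mul_le_mul_of_nonneg_left h1 hq.le
  have h4 : q * (p * Real.exp (-x) / q - 1) = p * Real.exp (-x) - q := by
    field_simp
  have h5 : p * Real.exp (-x) ≤ p * (1 - x + x ^ 2) :=
    mul_le_mul_of_nonneg_left (exp_neg_le_quad x hx) hp.le
  have h6 : Real.log (q / p) = Real.log q - Real.log p := Real.log_div hq.ne' hp.ne'
  nlinarith [h3, h4, h5]

lemma chisq_term (p q : ℝ) (hp : 0 < p) (hq : 0 < q) :
    q * Real.log (q / p) + p - q ≤ (q - p) ^ 2 / p := by
  have h1 := Real.log_le_sub_one_of_pos (div_pos hq hp)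
  have h2 : q * Real.log (q / p) ≤ q * (q / p - 1) := mul_le_mul_of_nonneg_left h1 hq.le
  have h3 : (q - p) ^ 2 / p = q * (q/p - 1) + p - q := by field_simp; ring
  linarith

lemma gibbs_term (p q : ℝ) (hp : 0 < p) (hq : 0 < q) :
    0 ≤ q * Real.log (q / p) + p - q := by
  have h1 := Real.log_le_sub_one_of_pos (div_pos hp hq)
  have h2 : Real.log (p / q) = - Real.log (q / p) := by
    rw [Real.log_div hp.ne' hq.ne', Real.log_div hq.ne' hp.ne']; ring
  rw [h2] at h1
  have h3 : q * (- Real.log (q/p)) ≤ q * (p / q - 1) := mul_le_mul_of_nonneg_left h1 hq.le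
  have h4 : q * (p / q - 1) = p - q := by field_simp
  nlinarith

lemma nonneg_of_small (a c : ℝ) (hc : 0 ≤ c) (h : ∀ s : ℝ, 0 < s → s ≤ 1 → -(s * c) ≤ a) :
    0 ≤ a := by
  by_contra hA
  push_neg at hA
  rcases eq_or_lt_of_le hc with hc0 | hc0
  · have := h 1 one_pos le_rfl; rw [← hc0] at this; simp at this; linarith
  · have hs : 0 < min 1 (-a / (2 * c)) := by
      apply lt_min one_pos
      apply div_pos (by linarith) (by linarith)
    have h1 := h _ hs (min_le_left _ _)
    have h2 : min 1 (-a / (2 * c)) ≤ -a / (2 * c) := min_le_right _ _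
    have h3 : min 1 (-a / (2 * c)) * c ≤ (-a / (2 * c)) * c := by
      exact mul_le_mul_of_nonneg_right h2 hc
    have h4 : (-a / (2 * c)) * c = -a / 2 := by field_simp
    nlinarith



lemma entropy_hasFDerivAt {K : ℕ} (C : Finset (Fin K)) (c : ℝ) (y : Fin K → ℝ)
    (hy : ∀ i ∈ C, y i ≠ 0) :
    HasFDerivAt (fun q : Fin K → ℝ => c * ∑ i ∈ C, q i * Real.log (q i))
      (c • (∑ i ∈ C, (Real.log (y i) + 1) •
        (ContinuousLinearMap.proj i : (Fin K → ℝ) →L[ℝ] ℝ))) y := by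
  apply HasFDerivAt.const_mul
  apply HasFDerivAt.fun_sum
  intro i hi
  have h1 : HasDerivAt (fun x : ℝ => x * Real.log x) (Real.log (y i) + 1) (y i) :=
    Real.hasDerivAt_mul_log (hy i hi)
  have h2 : HasFDerivAt (fun q : Fin K → ℝ => q i)
      (ContinuousLinearMap.proj i : (Fin K → ℝ) →L[ℝ] ℝ) y :=
    by exact (ContinuousLinearMap.proj (R := ℝ) (φ := fun _ : Fin K => ℝ) i).hasFDerivAt
  exact h1.comp_hasFDerivAt y h2

lemma breg_entropy_eq {K : ℕ} (C : Finset (Fin K)) (c : ℝ) (x y : Fin K → ℝ)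
    (hy : ∀ i ∈ C, y i ≠ 0) :
    breg (fun q : Fin K → ℝ => c * ∑ i ∈ C, q i * Real.log (q i)) x y =
      c * ∑ i ∈ C, (x i * Real.log (x i) - y i * Real.log (y i)
        - (Real.log (y i) + 1) * (x i - y i)) := by
  have h := entropy_hasFDerivAt C c y hy
  rw [breg, h.fderiv]
  have : (c • (∑ i ∈ C, (Real.log (y i) + 1) •
        (ContinuousLinearMap.proj i : (Fin K → ℝ) →L[ℝ] ℝ))) (x - y)
      = c * ∑ i ∈ C, (Real.log (y i) + 1) * (x i - y i) := by
    simp [ContinuousLinearMap.sum_apply, ContinuousLinearMap.smul_apply,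
      ContinuousLinearMap.proj_apply, Finset.mul_sum]
  rw [this, Finset.mul_sum, Finset.mul_sum, Finset.mul_sum, ← Finset.sum_sub_distrib,
    ← Finset.sum_sub_distrib]
  rw [Finset.mul_sum]
  apply Finset.sum_congr rfl; intro i _; ring





lemma mirror_step {K : ℕ} (C : Finset (Fin K)) (c : ℝ) (hc : 0 < c)
    (pt p' u ℓv : Fin K → ℝ)
    (hpt : ∀ i ∈ C, 0 < pt i) (hp' : ∀ i ∈ C, 0 < p' i) (hupos : ∀ i ∈ C, 0 < u i)
    (hptz : ∀ i ∉ C, pt i = 0) (hp'z : ∀ i ∉ C, p' i = 0) (huz : ∀ i ∉ C, u i = 0)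
    (hpts : ∑ i ∈ C, pt i = 1) (hp's : ∑ i ∈ C, p' i = 1) (hus : ∑ i ∈ C, u i = 1)
    (hptnn : ∀ i, 0 ≤ pt i)
    (hl : ∀ i, 0 ≤ ℓv i)
    (hopt : ∀ s : ℝ, 0 < s → s ≤ 1 →
      (∑ i, p' i * ℓv i) + c * ∑ i ∈ C, p' i * Real.log (p' i / pt i)
        ≤ (∑ i, (p' i + s * (u i - p' i)) * ℓv i)
          + c * ∑ i ∈ C, (p' i + s * (u i - p' i)) *
              Real.log ((p' i + s * (u i - p' i)) / pt i)) :
    ∑ i, (pt i - u i) * ℓv i ≤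
      (∑ i, pt i * ℓv i ^ 2) / c
        + c * ((∑ i ∈ C, u i * Real.log (u i / pt i))
             - ∑ i ∈ C, u i * Real.log (u i / p' i)) := by
  -- linearization identity
  have hlin : ∀ (v : Fin K → ℝ), (∀ i ∈ C, 0 < v i) →
      ∑ i ∈ C, v i * Real.log (v i / pt i) =
        ∑ i ∈ C, v i * Real.log (v i / p' i) +
          ∑ i ∈ C, v i * Real.log (p' i / pt i) := by
    intro v hv
    rw [← Finset.sum_add_distrib]
    apply Finset.sum_congr rfl
    intro i hi
    rw [Real.log_div (hv i hi).ne' (hpt i hi).ne', Real.log_div (hv i hi).ne' (hp' i hi).ne',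
      Real.log_div (hp' i hi).ne' (hpt i hi).ne']
    ring
  -- linearity of sums along the segment
  have hlinsum : ∀ (s : ℝ) (F : Finset (Fin K)) (g : Fin K → ℝ),
      ∑ i ∈ F, (p' i + s * (u i - p' i)) * g i
        = (∑ i ∈ F, p' i * g i) + s * ((∑ i ∈ F, u i * g i) - ∑ i ∈ F, p' i * g i) := by
    intro s F g
    calc ∑ i ∈ F, (p' i + s * (u i - p' i)) * g i
        = ∑ i ∈ F, (p' i * g i + s * (u i * g i - p' i * g i)) := by
          apply Finset.sum_congr rfl; intro i _; ring
      _ = (∑ i ∈ F, p' i * g i) + ∑ i ∈ F, s * (u i * g i - p' i * g i) :=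
          Finset.sum_add_distrib
      _ = (∑ i ∈ F, p' i * g i) + s * ∑ i ∈ F, (u i * g i - p' i * g i) := by
          rw [← Finset.mul_sum]
      _ = _ := by rw [Finset.sum_sub_distrib]
  have hKL2p' : ∑ i ∈ C, p' i * Real.log (p' i / p' i) = 0 := by
    apply Finset.sum_eq_zero
    intro i hi
    rw [div_self (hp' i hi).ne', Real.log_one, mul_zero]
  -- qs positivity
  have hqs : ∀ s : ℝ, 0 < s → s ≤ 1 → ∀ i ∈ C, 0 < p' i + s * (u i - p' i) := by
    intro s hs hs1 i hi
    nlinarith [hp' i hi, hupos i hi]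
  set M : ℝ := ∑ i ∈ C, (u i - p' i) ^ 2 / p' i with hM
  have hMnn : 0 ≤ M :=
    Finset.sum_nonneg fun i hi => div_nonneg (sq_nonneg _) (hp' i hi).le
  set X : ℝ := ∑ i ∈ C, u i * Real.log (u i / pt i) with hX
  set Y : ℝ := ∑ i ∈ C, u i * Real.log (u i / p' i) with hY
  set Z : ℝ := ∑ i ∈ C, p' i * Real.log (p' i / pt i) with hZ
  set Lp : ℝ := ∑ i, p' i * ℓv i with hLp
  set Lu : ℝ := ∑ i, u i * ℓv i with hLu
  -- A p' ≤ A u, where A v = Σ v ℓ + c Σ_{C} v log(p'/pt)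
  have hAmain : Lp + c * Z ≤ Lu + c * (X - Y) := by
    have hub : ∑ i ∈ C, u i * Real.log (p' i / pt i) = X - Y := by
      have := hlin u hupos
      rw [← hX, ← hY] at this
      linarith
    have key : ∀ s : ℝ, 0 < s → s ≤ 1 →
        -(s * (c * M)) ≤ (Lu + c * (X - Y)) - (Lp + c * Z) := by
      intro s hs hs1
      have h1 := hopt s hs hs1
      rw [hlin _ (hqs s hs hs1)] at h1
      -- KL2 of qs is ≤ s^2 M
      have h2 : ∑ i ∈ C, (p' i + s * (u i - p' i)) *
          Real.log ((p' i + s * (u i - p' i)) / p' i) ≤ s ^ 2 * M := by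
        have hzero : ∑ i ∈ C, (p' i - (p' i + s * (u i - p' i))) = 0 := by
          calc ∑ i ∈ C, (p' i - (p' i + s * (u i - p' i)))
              = ∑ i ∈ C, (s * p' i - s * u i) := by
                apply Finset.sum_congr rfl; intro i _; ring
            _ = s * (∑ i ∈ C, p' i) - s * (∑ i ∈ C, u i) := by
                rw [Finset.sum_sub_distrib, ← Finset.mul_sum, ← Finset.mul_sum]
            _ = 0 := by rw [hp's, hus]; ring
        calc ∑ i ∈ C, (p' i + s * (u i - p' i)) *
              Real.log ((p' i + s * (u i - p' i)) / p' i)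
            = ∑ i ∈ C, ((p' i + s * (u i - p' i)) *
                Real.log ((p' i + s * (u i - p' i)) / p' i)
                + (p' i - (p' i + s * (u i - p' i)))) := by
              rw [Finset.sum_add_distrib, hzero, add_zero]
          _ ≤ ∑ i ∈ C, s ^ 2 * ((u i - p' i) ^ 2 / p' i) := by
              apply Finset.sum_le_sum
              intro i hi
              have h := chisq_term (p' i) (p' i + s * (u i - p' i)) (hp' i hi)
                (hqs s hs hs1 i hi)
              have he : (p' i + s * (u i - p' i) - p' i) ^ 2 / p' i
                  = s ^ 2 * ((u i - p' i) ^ 2 / p' i) := by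
                rw [show p' i + s * (u i - p' i) - p' i = s * (u i - p' i) by ring,
                  mul_pow, mul_div_assoc]
              calc (p' i + s * (u i - p' i)) *
                    Real.log ((p' i + s * (u i - p' i)) / p' i)
                    + (p' i - (p' i + s * (u i - p' i)))
                  = (p' i + s * (u i - p' i)) *
                    Real.log ((p' i + s * (u i - p' i)) / p' i)
                    + p' i - (p' i + s * (u i - p' i)) := by ring
                _ ≤ (p' i + s * (u i - p' i) - p' i) ^ 2 / p' i := h
                _ = s ^ 2 * ((u i - p' i) ^ 2 / p' i) := he
          _ = s ^ 2 * M := by rw [hM, Finset.mul_sum]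
      -- linearity of both linear parts
      have h3 : ∑ i, (p' i + s * (u i - p' i)) * ℓv i = Lp + s * (Lu - Lp) :=
        hlinsum s Finset.univ ℓv
      have h4 : ∑ i ∈ C, (p' i + s * (u i - p' i)) * Real.log (p' i / pt i)
          = Z + s * ((X - Y) - Z) := by
        rw [hlinsum s C (fun i => Real.log (p' i / pt i)), hub, ← hZ]
      rw [h3, h4] at h1
      -- h1 : Lp + c*Z ≤ Lp + s*(Lu-Lp) + c*(KL2qs + (Z + s*((X-Y)-Z)))
      have h5 : 0 ≤ s * ((Lu + c * (X - Y)) - (Lp + c * Z)) + c * (s ^ 2 * M) := by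
        nlinarith [h1, h2]
      have h6 : 0 ≤ ((Lu + c * (X - Y)) - (Lp + c * Z)) + s * (c * M) := by
        by_contra hneg
        push_neg at hneg
        nlinarith [mul_pos hs (by linarith :
          0 < -(((Lu + c * (X - Y)) - (Lp + c * Z)) + s * (c * M)))]
      linarith
    have := nonneg_of_small ((Lu + c * (X - Y)) - (Lp + c * Z)) (c * M)
      (by positivity) key
    linarith
  -- stability
  have hstab : ∑ i, (pt i - p' i) * ℓv i ≤
      c * Z + (∑ i, pt i * ℓv i ^ 2) / c := by
    have hterm : ∀ i ∈ C, (pt i - p' i) * ℓv i ≤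
        c * (p' i * Real.log (p' i / pt i) + pt i - p' i) + pt i * ℓv i ^ 2 / c := by
      intro i hi
      have h := key_stab (pt i) (p' i) (ℓv i / c) (hpt i hi) (hp' i hi)
        (div_nonneg (hl i) hc.le)
      have h2 := mul_le_mul_of_nonneg_left h hc.le
      calc (pt i - p' i) * ℓv i = c * ((pt i - p' i) * (ℓv i / c)) := by
            field_simp
        _ ≤ c * (p' i * Real.log (p' i / pt i) + pt i - p' i + pt i * (ℓv i / c) ^ 2) := h2
        _ = c * (p' i * Real.log (p' i / pt i) + pt i - p' i)
            + c * (pt i * (ℓv i / c) ^ 2) := by ring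
        _ = c * (p' i * Real.log (p' i / pt i) + pt i - p' i) + pt i * ℓv i ^ 2 / c := by
            rw [div_pow]
            field_simp
    have hsum := Finset.sum_le_sum hterm
    have e1 : ∑ i, (pt i - p' i) * ℓv i = ∑ i ∈ C, (pt i - p' i) * ℓv i :=
      (Finset.sum_subset (Finset.subset_univ C)
        (fun i _ hi => by rw [hptz i hi, hp'z i hi]; ring)).symm
    have e2 : ∑ i ∈ C, (c * (p' i * Real.log (p' i / pt i) + pt i - p' i)
          + pt i * ℓv i ^ 2 / c)
        = c * Z + c * (∑ i ∈ C, pt i) - c * (∑ i ∈ C, p' i)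
          + (∑ i ∈ C, pt i * ℓv i ^ 2) / c := by
      calc ∑ i ∈ C, (c * (p' i * Real.log (p' i / pt i) + pt i - p' i)
              + pt i * ℓv i ^ 2 / c)
          = ∑ i ∈ C, (c * (p' i * Real.log (p' i / pt i)) + c * pt i - c * p' i
              + pt i * ℓv i ^ 2 / c) := by
            apply Finset.sum_congr rfl; intro i _; ring
        _ = _ := by
            rw [Finset.sum_add_distrib, Finset.sum_sub_distrib, Finset.sum_add_distrib,
              ← Finset.mul_sum, ← Finset.mul_sum, ← Finset.mul_sum, ← Finset.sum_div, hZ]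
    have e3 : (∑ i ∈ C, pt i * ℓv i ^ 2) ≤ ∑ i, pt i * ℓv i ^ 2 :=
      Finset.sum_le_sum_of_subset_of_nonneg (Finset.subset_univ C)
        (fun i _ _ => mul_nonneg (hptnn i) (sq_nonneg _))
    have e4 : (∑ i ∈ C, pt i * ℓv i ^ 2) / c ≤ (∑ i, pt i * ℓv i ^ 2) / c := by
      gcongr
    rw [e1]
    refine hsum.trans ?_
    rw [e2, hpts, hp's]
    linarith
  -- combine
  have d1 : ∀ a b : Fin K → ℝ, ∑ i, (a i - b i) * ℓv i
      = (∑ i, a i * ℓv i) - ∑ i, b i * ℓv i := by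
    intro a b
    rw [← Finset.sum_sub_distrib]
    apply Finset.sum_congr rfl; intro i _; ring
  have d2 := d1 pt u
  have d3 := d1 pt p'
  rw [d2]
  rw [d3] at hstab
  linarith




lemma breg_kl {K : ℕ} (C : Finset (Fin K)) (c : ℝ) (x y : Fin K → ℝ)
    (hx : ∀ i ∈ C, 0 < x i) (hy : ∀ i ∈ C, 0 < y i)
    (hxs : ∑ i ∈ C, x i = 1) (hys : ∑ i ∈ C, y i = 1) :
    breg (fun q : Fin K → ℝ => c * ∑ i ∈ C, q i * Real.log (q i)) x y =
      c * ∑ i ∈ C, x i * Real.log (x i / y i) := by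
  rw [breg_entropy_eq C c x y (fun i hi => (hy i hi).ne')]
  congr 1
  calc ∑ i ∈ C, (x i * Real.log (x i) - y i * Real.log (y i)
        - (Real.log (y i) + 1) * (x i - y i))
      = ∑ i ∈ C, (x i * Real.log (x i / y i) + (y i - x i)) := by
        apply Finset.sum_congr rfl
        intro i hi
        rw [Real.log_div (hx i hi).ne' (hy i hi).ne']
        ring
    _ = (∑ i ∈ C, x i * Real.log (x i / y i)) + ((∑ i ∈ C, y i) - ∑ i ∈ C, x i) := by
        rw [Finset.sum_add_distrib, Finset.sum_sub_distrib]
    _ = ∑ i ∈ C, x i * Real.log (x i / y i) := by rw [hxs, hys]; ring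


set_option maxHeartbeats 4000000 in
/-- Intermediate guarantee, uniform over comparators, for Hedge with adaptive
learning rates (Algorithm 3 of the paper) restricted to an active set `C`. -/
theorem stmt7 (K T : ℕ) (hK : 2 ≤ K) (hT : 1 ≤ T)
    (C : Finset (Fin K)) (hC : C.Nonempty)
    (Ω : Set (Fin K → ℝ))
    (hΩ : Ω = {p | p ∈ stdSimplex ℝ (Fin K) ∧
      (∀ i ∈ C, 1 / ((C.card : ℝ) * T) ≤ p i) ∧ ∀ i ∉ C, p i = 0})
    (p ℓ : ℕ → Fin K → ℝ) (η : ℕ → ℝ) (ψ : ℕ → (Fin K → ℝ) → ℝ)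
    (hp1 : ∀ i, p 1 i = if i ∈ C then ((C.card : ℝ))⁻¹ else 0)
    (hℓ0 : ∀ t ∈ Finset.Icc 1 T, ∀ i, 0 ≤ ℓ t i)
    (hη : ∀ t, η t = 1 / Real.sqrt (1 + ∑ τ ∈ Finset.Icc 1 t, ∑ i, p τ i * ℓ τ i ^ 2))
    (hψ : ∀ t, ψ t = fun q => (1 / η t) * ∑ i ∈ C, q i * Real.log (q i))
    (hupd : ∀ t ∈ Finset.Icc 1 T, p (t + 1) ∈ Ω ∧ ∀ q ∈ Ω,
      (∑ i, p (t + 1) i * ℓ t i) + breg (ψ t) (p (t + 1)) (p t)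
        ≤ (∑ i, q i * ℓ t i) + breg (ψ t) q (p t)) :
    ∀ u ∈ Ω,
      ∑ t ∈ Finset.Icc 1 T, ∑ i, (p t i - u i) * ℓ t i ≤
        Real.log K + (Real.log ((K : ℝ) * T) + 2) *
          Real.sqrt (1 + ∑ t ∈ Finset.Icc 1 T, ∑ i, p t i * ℓ t i ^ 2) := by
  intro u hu
  -- basic positivity
  have hCc : (0:ℝ) < C.card := by exact_mod_cast hC.card_pos
  have hTpos : (0:ℝ) < T := by exact_mod_cast hT
  have hKpos : (0:ℝ) < K := by positivity
  have hCK : (C.card : ℝ) ≤ K := by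
    exact_mod_cast (Finset.card_le_card (Finset.subset_univ C)).trans_eq (Finset.card_univ.trans (Fintype.card_fin K))
  -- membership facts
  have hΩmem : ∀ v ∈ Ω, v ∈ stdSimplex ℝ (Fin K) ∧
      (∀ i ∈ C, 1 / ((C.card : ℝ) * T) ≤ v i) ∧ ∀ i ∉ C, v i = 0 := by
    intro v hv; rw [hΩ] at hv; exact hv
  have hΩpos : ∀ v ∈ Ω, ∀ i ∈ C, 0 < v i := by
    intro v hv i hi
    have h := (hΩmem v hv).2.1 i hi
    have : (0:ℝ) < 1 / ((C.card : ℝ) * T) := by positivity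
    linarith
  have hΩzero : ∀ v ∈ Ω, ∀ i ∉ C, v i = 0 := fun v hv => (hΩmem v hv).2.2
  have hΩnn : ∀ v ∈ Ω, ∀ i, 0 ≤ v i := fun v hv i => (hΩmem v hv).1.1 i
  have hΩsum : ∀ v ∈ Ω, ∑ i ∈ C, v i = 1 := by
    intro v hv
    have h1 : ∑ i, v i = 1 := (hΩmem v hv).1.2
    rw [← h1]
    exact Finset.sum_subset (Finset.subset_univ C)
      (fun i _ hi => hΩzero v hv i hi)
  have hΩle1 : ∀ v ∈ Ω, ∀ i, v i ≤ 1 := by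
    intro v hv i
    have h1 : ∑ j, v j = 1 := (hΩmem v hv).1.2
    rw [← h1]
    exact Finset.single_le_sum (fun j _ => hΩnn v hv j) (Finset.mem_univ i)
  have hp1Ω : p 1 ∈ Ω := by
    rw [hΩ]
    refine ⟨⟨fun i => ?_, ?_⟩, fun i hi => ?_, fun i hi => ?_⟩
    · rw [hp1 i]; split
      · positivity
      · exact le_rfl
    · have : ∀ i, p 1 i = if i ∈ C then ((C.card:ℝ))⁻¹ else 0 := hp1
      calc ∑ i, p 1 i = ∑ i, (if i ∈ C then ((C.card:ℝ))⁻¹ else 0) := by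
            exact Finset.sum_congr rfl fun i _ => hp1 i
        _ = ∑ i ∈ C, ((C.card:ℝ))⁻¹ := by
            rw [Finset.sum_ite_mem, Finset.univ_inter]
        _ = 1 := by
            rw [Finset.sum_const, nsmul_eq_mul, mul_inv_cancel₀ hCc.ne']
    · rw [hp1 i, if_pos hi]
      have h1T : (1:ℝ) ≤ T := by exact_mod_cast hT
      rw [div_le_iff₀ (by positivity), inv_mul_eq_div, le_div_iff₀ hCc]
      nlinarith [mul_le_mul_of_nonneg_left h1T hCc.le]
    · rw [hp1 i, if_neg hi]
  have hpΩ : ∀ t ∈ Finset.Icc 1 (T+1), p t ∈ Ω := by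
    intro t ht
    simp only [Finset.mem_Icc] at ht
    rcases eq_or_lt_of_le ht.1 with h1 | h1
    · obtain rfl : t = 1 := h1.symm
      exact hp1Ω
    · obtain ⟨s, rfl⟩ : ∃ s, t = s + 1 := ⟨t - 1, by omega⟩
      exact (hupd s (Finset.mem_Icc.mpr ⟨by omega, by omega⟩)).1
  -- the quantities
  set z : ℕ → ℝ := fun t => ∑ i, p t i * ℓ t i ^ 2 with hz
  set S : ℕ → ℝ := fun t => 1 + ∑ τ ∈ Finset.Icc 1 t, z τ with hS
  set rt : ℕ → ℝ := fun t => Real.sqrt (S t) with hrt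
  set κ : ℕ → ℝ := fun t => ∑ i ∈ C, u i * Real.log (u i / p t i) with hκ
  have hznn : ∀ t ∈ Finset.Icc 1 T, 0 ≤ z t := by
    intro t ht
    apply Finset.sum_nonneg
    intro i _
    have := hΩnn _ (hpΩ t (Finset.mem_Icc.mpr ⟨(Finset.mem_Icc.mp ht).1,
      (Finset.mem_Icc.mp ht).2.trans (Nat.le_succ T)⟩)) i
    positivity
  have hS0 : S 0 = 1 := by simp [hS]
  have hSmono : ∀ n, n + 1 ≤ T → S n ≤ S (n+1) := by
    intro n hn
    have : S (n+1) = S n + z (n+1) := by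
      simp only [hS]
      rw [Finset.sum_Icc_succ_top (by omega : 1 ≤ n + 1)]
      ring
    rw [this]
    have := hznn (n+1) (Finset.mem_Icc.mpr ⟨by omega, hn⟩)
    linarith
  have hSone : ∀ n, n ≤ T → 1 ≤ S n := by
    intro n hn
    induction n with
    | zero => rw [hS0]
    | succ m ih =>
      have := hSmono m hn
      have := ih (by omega)
      linarith
  have hrtone : ∀ n, n ≤ T → 1 ≤ rt n := by
    intro n hn
    rw [hrt]
    rw [show (1:ℝ) = Real.sqrt 1 by rw [Real.sqrt_one]]
    exact Real.sqrt_le_sqrt (hSone n hn)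
  have hrtmono : ∀ n, n + 1 ≤ T → rt n ≤ rt (n+1) :=
    fun n hn => Real.sqrt_le_sqrt (hSmono n hn)
  have hrtsq : ∀ n, n ≤ T → rt n ^ 2 = S n := by
    intro n hn
    rw [hrt, Real.sq_sqrt (by linarith [hSone n hn])]
  -- κ bounds
  have hκeq : ∀ t ∈ Finset.Icc 1 (T+1),
      κ t = ∑ i ∈ C, (u i * Real.log (u i / p t i) + p t i - u i) := by
    intro t ht
    have hptΩ := hpΩ t ht
    rw [Finset.sum_sub_distrib, Finset.sum_add_distrib, hΩsum _ hptΩ, hΩsum u hu]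
    simp [hκ]
  have hκnn : ∀ t ∈ Finset.Icc 1 (T+1), 0 ≤ κ t := by
    intro t ht
    rw [hκeq t ht]
    apply Finset.sum_nonneg
    intro i hi
    have := gibbs_term (p t i) (u i) (hΩpos _ (hpΩ t ht) i hi) (hΩpos u hu i hi)
    linarith
  have hκB : ∀ t ∈ Finset.Icc 1 (T+1), κ t ≤ Real.log ((K:ℝ) * T) := by
    intro t ht
    have hptΩ := hpΩ t ht
    have hterm : ∀ i ∈ C, u i * Real.log (u i / p t i) ≤ u i * Real.log ((K:ℝ)*T) := by
      intro i hi
      have hppos := hΩpos _ hptΩ i hi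
      have hupos := hΩpos u hu i hi
      have hb := (hΩmem _ hptΩ).2.1 i hi
      have hb2 : 1 ≤ p t i * ((C.card:ℝ) * T) := (div_le_iff₀ (by positivity)).mp hb
      have hu1 := hΩle1 u hu i
      have hdiv : u i / p t i ≤ (K:ℝ)*T := by
        rw [div_le_iff₀ hppos]
        nlinarith
      have hlog : Real.log (u i / p t i) ≤ Real.log ((K:ℝ)*T) :=
        Real.log_le_log (by positivity) hdiv
      exact mul_le_mul_of_nonneg_left hlog hupos.le
    calc κ t ≤ ∑ i ∈ C, u i * Real.log ((K:ℝ)*T) := Finset.sum_le_sum hterm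
      _ = Real.log ((K:ℝ)*T) := by
          rw [← Finset.sum_mul, hΩsum u hu, one_mul]
  have hκ1 : κ 1 ≤ Real.log K := by
    have hterm : ∀ i ∈ C, u i * Real.log (u i / p 1 i) ≤ u i * Real.log (C.card : ℝ) := by
      intro i hi
      have hupos := hΩpos u hu i hi
      have hu1 := hΩle1 u hu i
      have hp1i : p 1 i = ((C.card:ℝ))⁻¹ := by rw [hp1 i, if_pos hi]
      have hlogu : Real.log (u i) ≤ 0 := Real.log_nonpos hupos.le hu1
      have heq : Real.log (u i / p 1 i) = Real.log (u i) + Real.log (C.card : ℝ) := by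
        rw [hp1i, Real.log_div hupos.ne' (inv_ne_zero hCc.ne'), Real.log_inv]
        ring
      rw [heq]
      nlinarith
    calc κ 1 ≤ ∑ i ∈ C, u i * Real.log (C.card : ℝ) := Finset.sum_le_sum hterm
      _ = Real.log (C.card : ℝ) := by rw [← Finset.sum_mul, hΩsum u hu, one_mul]
      _ ≤ Real.log K := Real.log_le_log hCc hCK
  -- per-step inequality
  have step : ∀ t ∈ Finset.Icc 1 T,
      ∑ i, (p t i - u i) * ℓ t i ≤ z t / rt t + rt t * (κ t - κ (t+1)) := by
    intro t ht
    obtain ⟨ht1, ht2⟩ := Finset.mem_Icc.mp ht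
    have hptΩ : p t ∈ Ω := hpΩ t (Finset.mem_Icc.mpr ⟨ht1, by omega⟩)
    have hp'Ω : p (t+1) ∈ Ω := hpΩ (t+1) (Finset.mem_Icc.mpr ⟨by omega, by omega⟩)
    have hcpos : 0 < rt t := by linarith [hrtone t ht2]
    have hψt : ψ t = fun q => rt t * ∑ i ∈ C, q i * Real.log (q i) := by
      rw [hψ t]
      have h1 : η t = 1 / rt t := hη t
      rw [h1, one_div_one_div]
    have hbreg : ∀ x ∈ Ω, breg (ψ t) x (p t)
        = rt t * ∑ i ∈ C, x i * Real.log (x i / p t i) := by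
      intro x hx
      rw [hψt]
      exact breg_kl C (rt t) x (p t) (hΩpos x hx) (hΩpos _ hptΩ)
        (hΩsum x hx) (hΩsum _ hptΩ)
    have hqsΩ : ∀ s : ℝ, 0 < s → s ≤ 1 →
        (fun i => p (t+1) i + s * (u i - p (t+1) i)) ∈ Ω := by
      intro s hs hs1
      have hm := hΩmem _ hp'Ω
      have hmu := hΩmem u hu
      rw [hΩ]
      refine ⟨⟨fun i => ?_, ?_⟩, fun i hi => ?_, fun i hi => ?_⟩
      · show 0 ≤ p (t+1) i + s * (u i - p (t+1) i)
        nlinarith [hΩnn _ hp'Ω i, hΩnn u hu i]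
      · have h1 : ∑ i, p (t+1) i = 1 := hm.1.2
        have h2 : ∑ i, u i = 1 := hmu.1.2
        have h3 : ∑ i, (p (t+1) i + s * (u i - p (t+1) i))
            = (∑ i, p (t+1) i) + s * ∑ i, (u i - p (t+1) i) := by
          rw [Finset.sum_add_distrib, ← Finset.mul_sum]
        show ∑ i, (p (t+1) i + s * (u i - p (t+1) i)) = 1
        rw [h3, Finset.sum_sub_distrib, h1, h2]
        ring
      · have b1 := hm.2.1 i hi
        have b2 := hmu.2.1 i hi
        show 1 / ((C.card : ℝ) * T) ≤ p (t+1) i + s * (u i - p (t+1) i)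
        nlinarith
      · have z1 := hm.2.2 i hi
        have z2 := hmu.2.2 i hi
        show p (t+1) i + s * (u i - p (t+1) i) = 0
        rw [z1, z2]
        ring
    have hopt : ∀ s : ℝ, 0 < s → s ≤ 1 →
        (∑ i, p (t+1) i * ℓ t i)
          + rt t * ∑ i ∈ C, p (t+1) i * Real.log (p (t+1) i / p t i)
        ≤ (∑ i, (p (t+1) i + s * (u i - p (t+1) i)) * ℓ t i)
          + rt t * ∑ i ∈ C, (p (t+1) i + s * (u i - p (t+1) i)) *
              Real.log ((p (t+1) i + s * (u i - p (t+1) i)) / p t i) := by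
      intro s hs hs1
      have h := (hupd t ht).2 _ (hqsΩ s hs hs1)
      rw [hbreg _ hp'Ω, hbreg _ (hqsΩ s hs hs1)] at h
      exact h
    exact mirror_step C (rt t) hcpos (p t) (p (t+1)) u (ℓ t)
      (hΩpos _ hptΩ) (hΩpos _ hp'Ω) (hΩpos u hu)
      (hΩzero _ hptΩ) (hΩzero _ hp'Ω) (hΩzero u hu)
      (hΩsum _ hptΩ) (hΩsum _ hp'Ω) (hΩsum u hu)
      (hΩnn _ hptΩ) (hℓ0 t ht) hopt
  -- summation bound A
  have sumA : ∀ n, n ≤ T → ∑ t ∈ Finset.Icc 1 n, z t / rt t ≤ 2 * (rt n - 1) := by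
    intro n hn
    induction n with
    | zero => simp [hrt, hS0]
    | succ m ih =>
      rw [Finset.sum_Icc_succ_top (by omega : 1 ≤ m + 1)]
      have h1 := ih (by omega)
      have h2 : z (m+1) / rt (m+1) ≤ 2 * (rt (m+1) - rt m) := by
        have hq1 : rt m ^ 2 = S m := hrtsq m (by omega)
        have hq2 : rt (m+1) ^ 2 = S (m+1) := hrtsq (m+1) hn
        have hzm : z (m+1) = S (m+1) - S m := by
          simp only [hS]
          rw [Finset.sum_Icc_succ_top (by omega : 1 ≤ m + 1)]
          ring
        have hm1 : 1 ≤ rt m := hrtone m (by omega)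
        have hm2 : rt m ≤ rt (m+1) := hrtmono m hn
        have hz2 : z (m+1) = (rt (m+1) - rt m) * (rt (m+1) + rt m) := by
          rw [hzm, ← hq1, ← hq2]; ring
        have hz3 : (rt (m+1) - rt m) * (rt (m+1) + rt m) ≤
            (rt (m+1) - rt m) * (2 * rt (m+1)) :=
          mul_le_mul_of_nonneg_left (by linarith) (by linarith)
        have hrpos : (0:ℝ) < rt (m+1) := by linarith
        have h4 : z (m+1) ≤ (rt (m+1) - rt m) * (2 * rt (m+1)) := by
          rw [hz2]; exact hz3
        calc z (m+1) / rt (m+1)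
            ≤ ((rt (m+1) - rt m) * (2 * rt (m+1))) / rt (m+1) :=
              (div_le_div_iff_of_pos_right hrpos).mpr h4
          _ = 2 * (rt (m+1) - rt m) := by field_simp
      have hm1 : 1 ≤ rt m := hrtone m (by omega)
      have hm2 : rt m ≤ rt (m+1) := hrtmono m hn
      linarith
  -- summation bound B (Abel)
  have sumB : ∀ n, n ≤ T → ∑ t ∈ Finset.Icc 1 n, rt t * (κ t - κ (t+1)) ≤
      κ 1 + Real.log ((K:ℝ)*T) * (rt n - 1) - rt n * κ (n+1) := by
    intro n hn
    induction n with
    | zero =>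
      simp only [Finset.Icc_eq_empty (by omega : ¬ (1:ℕ) ≤ 0), Finset.sum_empty]
      have h0 : rt 0 = 1 := by
        show Real.sqrt (S 0) = 1
        rw [hS0, Real.sqrt_one]
      rw [h0]; nlinarith [le_refl (κ 1)]
    | succ m ih =>
      rw [Finset.sum_Icc_succ_top (by omega : 1 ≤ m + 1)]
      have h1 := ih (by omega)
      have hm2 : rt m ≤ rt (m+1) := hrtmono m hn
      have hκm : κ (m+1) ≤ Real.log ((K:ℝ)*T) :=
        hκB (m+1) (Finset.mem_Icc.mpr ⟨by omega, by omega⟩)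
      have hκmn : 0 ≤ κ (m+1) := hκnn (m+1) (Finset.mem_Icc.mpr ⟨by omega, by omega⟩)
      nlinarith
  -- combine
  have htot : ∑ t ∈ Finset.Icc 1 T, ∑ i, (p t i - u i) * ℓ t i ≤
      ∑ t ∈ Finset.Icc 1 T, (z t / rt t + rt t * (κ t - κ (t+1))) :=
    Finset.sum_le_sum step
  rw [Finset.sum_add_distrib] at htot
  have hA := sumA T le_rfl
  have hB := sumB T le_rfl
  have hκT : 0 ≤ κ (T+1) := hκnn (T+1) (Finset.mem_Icc.mpr ⟨by omega, le_rfl⟩)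
  have hrT : 1 ≤ rt T := hrtone T le_rfl
  have h1K : (1:ℝ) ≤ K := by exact_mod_cast (by omega : 1 ≤ K)
  have h1T : (1:ℝ) ≤ T := by exact_mod_cast hT
  have hlogKT : 0 ≤ Real.log ((K:ℝ)*T) := by
    apply Real.log_nonneg
    nlinarith
  have hfinal : ∑ t ∈ Finset.Icc 1 T, ∑ i, (p t i - u i) * ℓ t i ≤
      Real.log K + (Real.log ((K:ℝ)*T) + 2) * rt T := by
    nlinarith [hκ1]
  exact hfinal
end
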